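/- arXiv:1405.0535 — 8 statements merged into one kernel-verified Lean document; each statement's English description precedes it below -/
import Mathlib

section
/- There exists γ_min > 0 such that for every γ ≥ γ_min, every solution of the regularized problem (P_γ) is a solution of the linear program (P). -/
open Matrix BigOperators

open Finset in
lemma carath_step {V : Type*} [AddCommGroup V] [Module ℝ V] {ι : Type*} [Fintype ι]
    [DecidableEq ι] (G : ι → V) (t w : ι → ℝ) (ht : ∀ j, 0 ≤ t j)
    (hw0 : ∑ j, w j • G j = 0) (hsupp : ∀ j, w j ≠ 0 → t j ≠ 0) (j₁ : ι) (hj₁ : 0 < w j₁) :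
    ∃ t' : ι → ℝ, (∀ j, 0 ≤ t' j) ∧ (∑ j, t' j • G j = ∑ j, t j • G j) ∧
      (Finset.univ.filter fun j => t' j ≠ 0) ⊂ (Finset.univ.filter fun j => t j ≠ 0) := by
  classical
  have hPne : (Finset.univ.filter fun j => 0 < w j).Nonempty := ⟨j₁, by simp [hj₁]⟩
  obtain ⟨j₀, hj₀mem, hj₀min⟩ := Finset.exists_min_image _ (fun j => t j / w j) hPne
  have hwj₀ : 0 < w j₀ := by simpa using hj₀mem
  set r := t j₀ / w j₀ with hr
  have hr0 : 0 ≤ r := div_nonneg (ht j₀) hwj₀.le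
  refine ⟨fun j => t j - r * w j, ?_, ?_, ?_⟩
  · intro j
    dsimp only
    by_cases hw : 0 < w j
    · have h1 := hj₀min j (by simp [hw])
      have : r * w j ≤ t j := by rw [← le_div_iff₀ hw]; exact h1
      linarith
    · push_neg at hw
      have h1 : r * w j ≤ 0 := mul_nonpos_of_nonneg_of_nonpos hr0 hw
      have := ht j; linarith
  · have he : ∀ x, (t x - r * w x) • G x = t x • G x - r • (w x • G x) := by
      intro x; rw [sub_smul, smul_smul]
    simp only [he, Finset.sum_sub_distrib, ← Finset.smul_sum, hw0, smul_zero, sub_zero]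
  · constructor
    · intro j hj
      simp only [Finset.mem_filter, Finset.mem_univ, true_and] at hj ⊢
      intro h0
      apply hj
      have : w j = 0 := by by_contra hwj; exact (hsupp j hwj) h0
      simp [h0, this]
    · intro hsub
      have h1 : j₀ ∈ Finset.univ.filter fun j => t j ≠ 0 := by
        simp only [Finset.mem_filter, Finset.mem_univ, true_and]
        exact hsupp j₀ hwj₀.ne'
      have h2 := hsub h1
      simp only [Finset.mem_filter, Finset.mem_univ, true_and] at h2
      apply h2
      rw [hr, div_mul_cancel₀ _ hwj₀.ne', sub_self]

lemma carath_cone {V : Type*} [AddCommGroup V] [Module ℝ V] {ι : Type*} [Fintype ι]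
    [DecidableEq ι] (G : ι → V) :
    ∀ (k : ℕ) (t : ι → ℝ), (Finset.univ.filter fun j => t j ≠ 0).card ≤ k → (∀ j, 0 ≤ t j) →
    ∃ t' : ι → ℝ, (∀ j, 0 ≤ t' j) ∧ (∑ j, t' j • G j = ∑ j, t j • G j) ∧
      LinearIndependent ℝ (fun j : {j : ι // t' j ≠ 0} => G j) := by
  intro k
  induction k with
  | zero =>
    intro t hcard ht
    refine ⟨t, ht, rfl, ?_⟩
    have hempty : (Finset.univ.filter fun j => t j ≠ 0) = ∅ :=
      Finset.card_eq_zero.mp (Nat.le_zero.mp hcard)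
    have : IsEmpty {j : ι // t j ≠ 0} := by
      constructor; rintro ⟨j, hj⟩
      have : j ∈ (Finset.univ.filter fun j => t j ≠ 0) := by simp [hj]
      simp [hempty] at this
    exact linearIndependent_empty_type
  | succ k ih =>
    intro t hcard ht
    by_cases hLI : LinearIndependent ℝ (fun j : {j : ι // t j ≠ 0} => G j)
    · exact ⟨t, ht, rfl, hLI⟩
    · obtain ⟨g, hg0, i₀, hgi₀⟩ := Fintype.not_linearIndependent_iff.mp hLI
      set w : ι → ℝ := fun j => if h : t j ≠ 0 then g ⟨j, h⟩ else 0 with hwdef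
      have hw0 : ∑ j, w j • G j = 0 := by
        have e1 : ∑ j, w j • G j = ∑ j ∈ (Finset.univ.filter fun j => t j ≠ 0), w j • G j := by
          refine (Finset.sum_subset (Finset.filter_subset _ _) ?_).symm
          intro j _ hj
          simp only [Finset.mem_filter, Finset.mem_univ, true_and, not_not] at hj
          simp [hwdef, hj]
        rw [e1, Finset.sum_subtype (p := fun j => t j ≠ 0) _ (fun j => by simp) (fun j => w j • G j), ← hg0]
        apply Finset.sum_congr rfl
        rintro ⟨j, hj⟩ _
        simp [hwdef, hj]
      have hsupp : ∀ j, w j ≠ 0 → t j ≠ 0 := by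
        intro j hwj
        by_contra h0
        simp [hwdef, h0] at hwj
      -- find a positive entry of w or -w
      have hwi₀ : w i₀.1 ≠ 0 := by simp [hwdef, i₀.2, hgi₀]
      rcases lt_or_gt_of_ne hwi₀ with hneg | hpos
      · have hw0' : ∑ j, (-w) j • G j = 0 := by
          simp only [Pi.neg_apply, neg_smul, Finset.sum_neg_distrib, hw0, neg_zero]
        obtain ⟨t', ht', hsum, hss⟩ := carath_step G t (-w) ht hw0'
          (fun j hj => hsupp j (by simpa using hj)) i₀.1 (by simpa using hneg)
        obtain ⟨t'', h1, h2, h3⟩ := ih t' (by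
          have := Finset.card_lt_card hss
          omega) ht'
        exact ⟨t'', h1, h2.trans hsum, h3⟩
      · obtain ⟨t', ht', hsum, hss⟩ := carath_step G t w ht hw0 hsupp i₀.1 hpos
        obtain ⟨t'', h1, h2, h3⟩ := ih t' (by
          have := Finset.card_lt_card hss
          omega) ht'
        exact ⟨t'', h1, h2.trans hsum, h3⟩

open Finset in
lemma cone_closed {V : Type*} [NormedAddCommGroup V] [NormedSpace ℝ V] {ι : Type*}
    [Fintype ι] [DecidableEq ι] (G : ι → V) :
    IsClosed {v : V | ∃ t : ι → ℝ, (∀ j, 0 ≤ t j) ∧ v = ∑ j, t j • G j} := by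
  classical
  -- the cone is a finite union of simplicial cones
  have hdecomp : {v : V | ∃ t : ι → ℝ, (∀ j, 0 ≤ t j) ∧ v = ∑ j, t j • G j} =
      ⋃ S : Finset ι, {v : V | LinearIndependent ℝ (fun j : {j : ι // j ∈ S} => G j) ∧
        ∃ t : ι → ℝ, (∀ j, 0 ≤ t j) ∧ (∀ j, j ∉ S → t j = 0) ∧ v = ∑ j, t j • G j} := by
    ext v
    simp only [Set.mem_setOf_eq, Set.mem_iUnion]
    constructor
    · rintro ⟨t, ht, rfl⟩
      obtain ⟨t', ht', hsum, hLI⟩ := carath_cone G (Finset.univ.filter fun j => t j ≠ 0).card t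
        le_rfl ht
      refine ⟨Finset.univ.filter fun j => t' j ≠ 0, ?_, t', ht', ?_, hsum.symm⟩
      · have hinj : Function.Injective
            (fun (j : {j : ι // j ∈ Finset.univ.filter fun j => t' j ≠ 0}) =>
              (⟨j.1, (Finset.mem_filter.mp j.2).2⟩ : {j : ι // t' j ≠ 0})) := by
          intro a b hab
          simp only [Subtype.mk.injEq] at hab
          exact Subtype.ext hab
        exact hLI.comp _ hinj
      · intro j hj
        simp only [Finset.mem_filter, Finset.mem_univ, true_and, not_not] at hj
        exact hj
    · rintro ⟨S, hLI, t, ht, hts, rfl⟩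
      exact ⟨t, ht, rfl⟩
  rw [hdecomp]
  apply isClosed_iUnion_of_finite
  intro S
  by_cases hLI : LinearIndependent ℝ (fun j : {j : ι // j ∈ S} => G j)
  · -- the simplicial cone is the image of the nonneg orthant under a closed embedding
    let L : ({j : ι // j ∈ S} → ℝ) →ₗ[ℝ] V :=
      { toFun := fun t => ∑ j : {j : ι // j ∈ S}, t j • G j.1
        map_add' := by intro a b; simp [add_smul, Finset.sum_add_distrib]
        map_smul' := by
          intro a b; simp only [Pi.smul_apply, smul_eq_mul, RingHom.id_apply, ← smul_smul,
            ← Finset.smul_sum] }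
    have hker : LinearMap.ker L = ⊥ := by
      rw [LinearMap.ker_eq_bot']
      intro g hg
      funext j
      exact Fintype.linearIndependent_iff.mp hLI g hg j
    have hemb : Topology.IsClosedEmbedding L := LinearMap.isClosedEmbedding_of_injective hker
    have himage : {v : V | LinearIndependent ℝ (fun j : {j : ι // j ∈ S} => G j) ∧
        ∃ t : ι → ℝ, (∀ j, 0 ≤ t j) ∧ (∀ j, j ∉ S → t j = 0) ∧ v = ∑ j, t j • G j} =
        L '' {t : {j : ι // j ∈ S} → ℝ | ∀ j, 0 ≤ t j} := by
      ext v
      simp only [Set.mem_setOf_eq, Set.mem_image]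
      constructor
      · rintro ⟨-, t, ht, hts, rfl⟩
        refine ⟨fun j => t j.1, fun j => ht j.1, ?_⟩
        show ∑ j : {j : ι // j ∈ S}, t j.1 • G j.1 = ∑ j, t j • G j
        rw [Finset.sum_coe_sort S (fun j => t j • G j)]
        refine Finset.sum_subset (Finset.subset_univ S) ?_
        intro j _ hj
        simp [hts j hj]
      · rintro ⟨g, hg, rfl⟩
        refine ⟨hLI, fun j => if h : j ∈ S then g ⟨j, h⟩ else 0, ?_, ?_, ?_⟩
        · intro j
          by_cases h : j ∈ S <;> simp [h, hg]
        · intro j hj; simp [hj]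
        · show ∑ j : {j : ι // j ∈ S}, g j • G j.1 = _
          dsimp only
          rw [show (∑ j : ι, (if h : j ∈ S then g ⟨j, h⟩ else 0) • G j) =
              ∑ j ∈ S, (if h : j ∈ S then g ⟨j, h⟩ else 0) • G j from
            (Finset.sum_subset (Finset.subset_univ S) (by intro j _ hj; simp [hj])).symm]
          rw [← Finset.sum_coe_sort S (fun j => (if h : j ∈ S then g ⟨j, h⟩ else 0) • G j)]
          apply Finset.sum_congr rfl
          rintro ⟨j, hj⟩ _
          simp [hj]
    rw [himage]
    apply hemb.isClosedMap
    have : {t : {j : ι // j ∈ S} → ℝ | ∀ j, 0 ≤ t j} = ⋂ j, {t | 0 ≤ t j} := by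
      ext t; simp [Set.mem_iInter]
    rw [this]
    exact isClosed_iInter fun j => isClosed_le continuous_const (continuous_apply j)
  · convert isClosed_empty
    ext v
    simp only [Set.mem_setOf_eq, Set.mem_empty_iff_false, iff_false]
    rintro ⟨h, -⟩
    exact hLI h

open Finset in
lemma farkas {n : ℕ} {ι : Type*} [Fintype ι] [DecidableEq ι]
    (G : ι → (Fin n → ℝ)) (v : Fin n → ℝ)
    (h : ∀ d : Fin n → ℝ, (∀ j, G j ⬝ᵥ d ≤ 0) → v ⬝ᵥ d ≤ 0) :
    ∃ t : ι → ℝ, (∀ j, 0 ≤ t j) ∧ v = ∑ j, t j • G j := by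
  classical
  by_contra hc
  push_neg at hc
  set E := EuclideanSpace ℝ (Fin n)
  let G' : ι → E := fun j => WithLp.toLp 2 (G j)
  let v' : E := WithLp.toLp 2 v
  let K : ConvexCone ℝ E :=
    { carrier := {x : E | ∃ t : ι → ℝ, (∀ j, 0 ≤ t j) ∧ x = ∑ j, t j • G' j}
      smul_mem' := by
        rintro a ha x ⟨t, ht, rfl⟩
        refine ⟨fun j => a * t j, fun j => mul_nonneg ha.le (ht j), ?_⟩
        rw [Finset.smul_sum]
        apply Finset.sum_congr rfl
        intro j _
        rw [smul_smul]
      add_mem' := by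
        rintro x ⟨t, ht, rfl⟩ y ⟨s, hs, rfl⟩
        refine ⟨fun j => t j + s j, fun j => add_nonneg (ht j) (hs j), ?_⟩
        rw [← Finset.sum_add_distrib]
        apply Finset.sum_congr rfl
        intro j _
        rw [add_smul] }
  have hKne : (K : Set E).Nonempty := ⟨0, fun _ => 0, fun _ => le_rfl, by simp⟩
  have hKclosed : IsClosed (K : Set E) := cone_closed G'
  have hvK : v' ∉ K := by
    rintro ⟨t, ht, hv⟩
    rw [show ∑ j, t j • G' j = WithLp.toLp 2 (∑ j, t j • G j) by
      rw [WithLp.toLp_sum]; rfl] at hv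
    exact hc t ht (WithLp.toLp_injective 2 hv)
  let P : ProperCone ℝ E :=
    { carrier := K
      add_mem' := fun hx hy => K.add_mem hx hy
      zero_mem' := ⟨fun _ => 0, fun _ => le_rfl, by simp⟩
      smul_mem' := by
        rintro c x ⟨t, ht, rfl⟩
        refine ⟨fun j => (c:ℝ) * t j, fun j => mul_nonneg c.2 (ht j), ?_⟩
        rw [Finset.smul_sum]
        apply Finset.sum_congr rfl
        intro j _
        change (c:ℝ) • t j • G' j = _
        rw [smul_smul]
      isClosed' := hKclosed }
  obtain ⟨y, hy1, hy2⟩ :=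
    P.hyperplane_separation' (x₀ := v') hvK
  have hinner : ∀ a b : E, (inner ℝ a b : ℝ) = ∑ i, a i * b i := by
    intro a b
    simp [E, PiLp.inner_apply, RCLike.inner_apply, conj_trivial]
    exact Finset.sum_congr rfl fun _ _ => mul_comm _ _
  have hGy : ∀ j, G j ⬝ᵥ (fun i => - y i) ≤ 0 := by
    intro j
    have hmem : G' j ∈ K := by
      refine ⟨fun j' => if j' = j then 1 else 0, fun j' => by positivity, ?_⟩
      simp [Finset.sum_ite_eq']
    have := hy1 _ hmem
    rw [hinner] at this
    simp only [dotProduct]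
    have : ∑ i, G j i * y i ≥ 0 := this
    simp only [mul_neg]
    rw [Finset.sum_neg_distrib]
    linarith
  have hvy := h _ hGy
  simp only [dotProduct, mul_neg] at hvy
  rw [Finset.sum_neg_distrib] at hvy
  rw [hinner] at hy2
  have : ∑ i, y i * v' i = ∑ i, v i * y i := by
    apply Finset.sum_congr rfl
    intro i _
    exact mul_comm _ _
  have hy2' : ∑ i, v i * y i < 0 := hy2
  linarith

open Finset in
/-- There exists γ_min > 0 such that for every γ ≥ γ_min, every solution of the
regularized problem (P_γ) is a solution of the linear program (P).  The LP
`min cᵀx s.t. Ax = b, x ≥ 0` is assumed feasible with finite optimal value. -/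
theorem exact_regularization (n m : ℕ) (c : Fin n → ℝ) (b : Fin m → ℝ)
    (A : Matrix (Fin m) (Fin n) ℝ)
    (hfeas : ∃ x : Fin n → ℝ, A *ᵥ x = b ∧ ∀ i, 0 ≤ x i)
    (hbdd : ∃ p : ℝ, ∀ x : Fin n → ℝ, A *ᵥ x = b → (∀ i, 0 ≤ x i) → p ≤ c ⬝ᵥ x) :
    ∃ γmin : ℝ, 0 < γmin ∧ ∀ γ : ℝ, γmin ≤ γ → ∀ x : Fin n → ℝ,
      -- x is a solution of the regularized problem (P_γ)
      ((A *ᵥ x = b ∧ ∀ i, 0 ≤ x i) ∧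
        ∀ y : Fin n → ℝ, A *ᵥ y = b → (∀ i, 0 ≤ y i) →
          γ * (c ⬝ᵥ x) + (1 / 2) * (x ⬝ᵥ x) ≤ γ * (c ⬝ᵥ y) + (1 / 2) * (y ⬝ᵥ y)) →
      -- x is a solution of the linear program (P)
      ((A *ᵥ x = b ∧ ∀ i, 0 ≤ x i) ∧
        ∀ y : Fin n → ℝ, A *ᵥ y = b → (∀ i, 0 ≤ y i) → c ⬝ᵥ x ≤ c ⬝ᵥ y) := by
  classical
  obtain ⟨x₀, hx₀A, hx₀pos⟩ := hfeas
  obtain ⟨p, hp⟩ := hbdd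
  -- ### Step 1: the LP optimal value is attained
  set G1 : Fin n → ((Fin m → ℝ) × ℝ) := fun j => (fun k => A k j, c j) with hG1
  have hsumG1 : ∀ t : Fin n → ℝ, ∑ j, t j • G1 j = (A *ᵥ t, c ⬝ᵥ t) := by
    intro t
    rw [Prod.ext_iff]
    constructor
    · rw [Prod.fst_sum]
      funext k
      rw [Finset.sum_apply]
      simp [hG1, mulVec, dotProduct, mul_comm]
    · rw [Prod.snd_sum]
      simp [hG1, dotProduct, mul_comm]
  set T : Set ℝ := {s : ℝ | ∃ t : Fin n → ℝ, (∀ j, 0 ≤ t j) ∧ A *ᵥ t = b ∧ c ⬝ᵥ t = s}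
    with hT
  have hTclosed : IsClosed T := by
    have heqT : T = (fun s => ((b, s) : (Fin m → ℝ) × ℝ)) ⁻¹'
        {v | ∃ t : Fin n → ℝ, (∀ j, 0 ≤ t j) ∧ v = ∑ j, t j • G1 j} := by
      ext s
      simp only [hT, Set.mem_setOf_eq, Set.mem_preimage]
      constructor
      · rintro ⟨t, ht, hA, hc'⟩
        exact ⟨t, ht, by rw [hsumG1, hA, hc']⟩
      · rintro ⟨t, ht, heq⟩
        rw [hsumG1] at heq
        rw [Prod.ext_iff] at heq
        exact ⟨t, ht, heq.1.symm, heq.2.symm⟩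
    rw [heqT]
    exact (cone_closed G1).preimage (continuous_const.prodMk continuous_id)
  have hTne : T.Nonempty := ⟨c ⬝ᵥ x₀, x₀, hx₀pos, hx₀A, rfl⟩
  have hTbdd : BddBelow T := ⟨p, by rintro s ⟨t, ht, hA, rfl⟩; exact hp t hA ht⟩
  set pstar := sInf T with hpstar
  have hps : pstar ∈ T := hTclosed.csInf_mem hTne hTbdd
  have hplow : ∀ y, A *ᵥ y = b → (∀ i, 0 ≤ y i) → pstar ≤ c ⬝ᵥ y :=
    fun y hA hy => csInf_le hTbdd ⟨y, hy, hA, rfl⟩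
  obtain ⟨xs, hxs_pos, hxsA, hxsc⟩ := hps
  -- ### Step 2: the minimal norm LP solution xbar
  set S : Set (Fin n → ℝ) := {x | A *ᵥ x = b ∧ (∀ i, 0 ≤ x i) ∧ c ⬝ᵥ x ≤ pstar} with hS
  have hScl : IsClosed S := by
    have : S = (⋂ k, {x : Fin n → ℝ | (A *ᵥ x) k = b k}) ∩
        ((⋂ i, {x : Fin n → ℝ | 0 ≤ x i}) ∩ {x | c ⬝ᵥ x ≤ pstar}) := by
      ext x
      simp only [hS, Set.mem_setOf_eq, Set.mem_inter_iff, Set.mem_iInter]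
      constructor
      · rintro ⟨h1, h2, h3⟩
        exact ⟨fun k => by rw [h1], ⟨h2, h3⟩⟩
      · rintro ⟨h1, h2, h3⟩
        exact ⟨funext h1, h2, h3⟩
    rw [this]
    have hcont : ∀ k, Continuous (fun x : Fin n → ℝ => (A *ᵥ x) k) := by
      intro k
      simp only [mulVec, dotProduct]
      exact continuous_finset_sum _ fun j _ => continuous_const.mul (continuous_apply j)
    have hdotc : Continuous (fun x : Fin n → ℝ => c ⬝ᵥ x) := by
      simp only [dotProduct]
      exact continuous_finset_sum _ fun j _ => continuous_const.mul (continuous_apply j)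
    refine IsClosed.inter (isClosed_iInter fun k => isClosed_eq (hcont k) continuous_const)
      (IsClosed.inter (isClosed_iInter fun i =>
        isClosed_le continuous_const (continuous_apply i))
        (isClosed_le hdotc continuous_const))
  have hdotself : Continuous (fun x : Fin n → ℝ => x ⬝ᵥ x) := by
    simp only [dotProduct]
    exact continuous_finset_sum _ fun j _ => (continuous_apply j).mul (continuous_apply j)
  set K₀ : Set (Fin n → ℝ) := S ∩ {x | x ⬝ᵥ x ≤ xs ⬝ᵥ xs} with hK₀
  have hK₀cl : IsClosed K₀ := hScl.inter (isClosed_le hdotself continuous_const)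
  have hK₀sub : K₀ ⊆ Metric.closedBall 0 (Real.sqrt (xs ⬝ᵥ xs)) := by
    rintro x ⟨-, hx⟩
    rw [Metric.mem_closedBall, dist_zero_right]
    have h0 : (0:ℝ) ≤ Real.sqrt (xs ⬝ᵥ xs) := Real.sqrt_nonneg _
    rw [pi_norm_le_iff_of_nonneg h0]
    intro i
    rw [Real.norm_eq_abs]
    have h1 : x i * x i ≤ x ⬝ᵥ x := by
      have := Finset.single_le_sum (f := fun j => x j * x j)
        (fun j _ => mul_self_nonneg (x j)) (Finset.mem_univ i)
      simpa [dotProduct] using this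
    have hx' : x ⬝ᵥ x ≤ xs ⬝ᵥ xs := hx
    have h2 : |x i| ^ 2 ≤ xs ⬝ᵥ xs := by
      rw [sq_abs]
      nlinarith [hx']
    calc |x i| = Real.sqrt (|x i| ^ 2) := by rw [Real.sqrt_sq (abs_nonneg _)]
      _ ≤ Real.sqrt (xs ⬝ᵥ xs) := Real.sqrt_le_sqrt h2
  have hK₀cpt : IsCompact K₀ :=
    Metric.isCompact_of_isClosed_isBounded hK₀cl
      ((Metric.isBounded_closedBall).subset hK₀sub)
  have hxsS : xs ∈ S := ⟨hxsA, hxs_pos, le_of_eq hxsc⟩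
  have hK₀ne : K₀.Nonempty := ⟨xs, hxsS, (le_rfl : xs ⬝ᵥ xs ≤ xs ⬝ᵥ xs)⟩
  obtain ⟨xbar, hxbarK₀, hxbarmin⟩ := hK₀cpt.exists_isMinOn hK₀ne hdotself.continuousOn
  obtain ⟨⟨hxbarA, hxbarpos, hxbarc⟩, hxbarball⟩ := hxbarK₀
  have hminS : ∀ y ∈ S, xbar ⬝ᵥ xbar ≤ y ⬝ᵥ y := by
    intro y hy
    by_cases hyb : y ⬝ᵥ y ≤ xs ⬝ᵥ xs
    · exact hxbarmin ⟨hy, hyb⟩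
    · push_neg at hyb
      calc xbar ⬝ᵥ xbar ≤ xs ⬝ᵥ xs := hxbarmin ⟨hxsS, (le_rfl : xs ⬝ᵥ xs ≤ xs ⬝ᵥ xs)⟩
        _ ≤ y ⬝ᵥ y := hyb.le
  -- ### Step 3: variational inequality at xbar
  have hstep3 : ∀ d : Fin n → ℝ, A *ᵥ d = 0 → (∀ i, xbar i = 0 → 0 ≤ d i) →
      c ⬝ᵥ d ≤ 0 → 0 ≤ xbar ⬝ᵥ d := by
    intro d hAd hdZ hcd
    set e : Fin n → ℝ := fun i => if d i < 0 then xbar i / (-(d i)) else 1 with he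
    have hepos : ∀ i, 0 < e i := by
      intro i
      simp only [he]
      split_ifs with hdi
      · have hxi : xbar i ≠ 0 := by
          intro h0
          have := hdZ i h0
          linarith
        have hxip : 0 < xbar i := lt_of_le_of_ne (hxbarpos i) (Ne.symm hxi)
        exact div_pos hxip (by linarith)
      · exact one_pos
    set F1 : Finset ℝ := insert 1 (Finset.image e Finset.univ) with hF1
    have hF1ne : F1.Nonempty := ⟨1, Finset.mem_insert_self _ _⟩
    set ε₀ := F1.min' hF1ne with hε₀
    have hε₀pos : 0 < ε₀ := by
      have hm : ε₀ ∈ F1 := F1.min'_mem hF1ne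
      rw [hF1, Finset.mem_insert] at hm
      rcases hm with h | h
      · rw [h]; exact one_pos
      · obtain ⟨i, -, hi⟩ := Finset.mem_image.mp h
        rw [← hi]; exact hepos i
    have hε₀le : ∀ i, ε₀ ≤ e i := fun i =>
      Finset.min'_le _ _ (Finset.mem_insert_of_mem (Finset.mem_image_of_mem e (Finset.mem_univ i)))
    have hmem : ∀ ε : ℝ, 0 < ε → ε ≤ ε₀ → (xbar + ε • d) ∈ S := by
      intro ε hε hεle
      refine ⟨?_, ?_, ?_⟩
      · rw [mulVec_add, mulVec_smul, hAd, smul_zero, add_zero, hxbarA]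
      · intro i
        simp only [Pi.add_apply, Pi.smul_apply, smul_eq_mul]
        by_cases hdi : d i < 0
        · have h1 : ε ≤ xbar i / (-(d i)) := by
            have := hε₀le i
            rw [he] at this
            simp only [if_pos hdi] at this
            linarith
          have h2 : ε * (-(d i)) ≤ xbar i := by
            rw [← le_div_iff₀ (by linarith : (0:ℝ) < -(d i))]
            exact h1
          linarith
        · push_neg at hdi
          have : 0 ≤ ε * d i := mul_nonneg hε.le hdi
          linarith [hxbarpos i]
      · rw [dotProduct_add]
        have h1 : c ⬝ᵥ (ε • d) = ε * (c ⬝ᵥ d) := by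
          simp only [dotProduct, Pi.smul_apply, smul_eq_mul, Finset.mul_sum]
          apply Finset.sum_congr rfl
          intro j _
          ring
        rw [h1]
        have h2 : ε * (c ⬝ᵥ d) ≤ 0 := mul_nonpos_of_nonneg_of_nonpos hε.le hcd
        linarith [hxbarc]
    have hineq : ∀ ε : ℝ, 0 < ε → ε ≤ ε₀ → 0 ≤ 2 * (xbar ⬝ᵥ d) + ε * (d ⬝ᵥ d) := by
      intro ε hε hεle
      have h1 := hminS _ (hmem ε hε hεle)
      have hexp : (xbar + ε • d) ⬝ᵥ (xbar + ε • d) =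
          xbar ⬝ᵥ xbar + 2*ε*(xbar ⬝ᵥ d) + ε^2*(d ⬝ᵥ d) := by
        simp only [dotProduct, Pi.add_apply, Pi.smul_apply, smul_eq_mul, Finset.mul_sum,
          ← Finset.sum_add_distrib]
        apply Finset.sum_congr rfl
        intro j _
        ring
      rw [hexp] at h1
      nlinarith [hε]
    by_contra hneg
    push_neg at hneg
    have hbb : 0 ≤ d ⬝ᵥ d := Finset.sum_nonneg fun j _ => mul_self_nonneg (d j)
    set a := xbar ⬝ᵥ d with ha
    set bb := d ⬝ᵥ d with hbbd
    have hq : 0 < -a / (bb + 1) := div_pos (by linarith) (by linarith)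
    have hεc : 0 < min ε₀ (-a/(bb+1)) := lt_min hε₀pos hq
    have h2 := hineq _ hεc (min_le_left _ _)
    have hle : min ε₀ (-a/(bb+1)) ≤ -a/(bb+1) := min_le_right _ _
    have h3 : (min ε₀ (-a/(bb+1))) * (bb + 1) ≤ -a := by
      rw [← le_div_iff₀ (by linarith : (0:ℝ) < bb + 1)]
      exact hle
    nlinarith [h2, h3, hεc, hbb]
  -- ### Step 4: Farkas / KKT multipliers
  set GG : (Fin m ⊕ Fin m) ⊕ (Fin n ⊕ Unit) → (Fin n → ℝ) :=
    Sum.elim (Sum.elim (fun k => fun j => A k j) (fun k => fun j => -A k j))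
      (Sum.elim (fun i => fun j => if j = i then (if xbar i = 0 then (-1:ℝ) else 0) else 0)
        (fun _ => c)) with hGG
  have hfark : ∃ t : ((Fin m ⊕ Fin m) ⊕ (Fin n ⊕ Unit)) → ℝ, (∀ j, 0 ≤ t j) ∧
      (-xbar) = ∑ j, t j • GG j := by
    apply farkas
    intro d hd
    have hAd : A *ᵥ d = 0 := by
      funext k
      have h1 := hd (Sum.inl (Sum.inl k))
      have h2 := hd (Sum.inl (Sum.inr k))
      simp only [hGG, Sum.elim_inl, Sum.elim_inr] at h1 h2
      have h2' : (fun j => -A k j) ⬝ᵥ d = -((fun j => A k j) ⬝ᵥ d) := by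
        simp [dotProduct, neg_mul, Finset.sum_neg_distrib]
      rw [h2'] at h2
      have hmv : (A *ᵥ d) k = (fun j => A k j) ⬝ᵥ d := rfl
      rw [Pi.zero_apply, hmv]
      linarith
    have hdZ : ∀ i, xbar i = 0 → 0 ≤ d i := by
      intro i h0
      have h1 := hd (Sum.inr (Sum.inl i))
      simp only [hGG, Sum.elim_inr, Sum.elim_inl] at h1
      have hdot : (fun j => if j = i then (if xbar i = 0 then (-1:ℝ) else 0) else 0) ⬝ᵥ d
          = -(d i) := by
        simp [dotProduct, ite_mul, Finset.sum_ite_eq', h0]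
      rw [hdot] at h1
      linarith
    have hcd : c ⬝ᵥ d ≤ 0 := by
      have h1 := hd (Sum.inr (Sum.inr ()))
      simpa [hGG] using h1
    have h5 := hstep3 d hAd hdZ hcd
    have hnd : (-xbar) ⬝ᵥ d = -(xbar ⬝ᵥ d) := by
      simp [dotProduct, neg_mul, Finset.sum_neg_distrib]
    rw [hnd]
    linarith
  obtain ⟨t, ht, heq⟩ := hfark
  set lam := t (Sum.inr (Sum.inr ())) with hlamdef
  set s' : Fin n → ℝ := fun i => if xbar i = 0 then t (Sum.inr (Sum.inl i)) else 0 with hs'def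
  set u : Fin m → ℝ := fun k => t (Sum.inl (Sum.inr k)) - t (Sum.inl (Sum.inl k)) with hudef
  have hlam0 : 0 ≤ lam := ht _
  have hs'pos : ∀ i, 0 ≤ s' i := by
    intro i
    rw [hs'def]
    dsimp only
    split_ifs with h
    · exact ht _
    · exact le_rfl
  have hs'z : ∀ i, s' i * xbar i = 0 := by
    intro i
    rw [hs'def]
    dsimp only
    split_ifs with h
    · rw [h, mul_zero]
    · rw [zero_mul]
  -- representation of xbar in terms of multipliers
  have hrep : ∀ j', xbar j' = (∑ k, u k * A k j') + s' j' - lam * c j' := by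
    intro j'
    have h0 := congrFun heq j'
    rw [Finset.sum_apply] at h0
    rw [Fintype.sum_sum_type, Fintype.sum_sum_type, Fintype.sum_sum_type] at h0
    simp only [hGG, Sum.elim_inl, Sum.elim_inr, Pi.smul_apply, smul_eq_mul] at h0
    have h3 : ∑ i, t (Sum.inr (Sum.inl i)) *
        (if j' = i then (if xbar i = 0 then (-1:ℝ) else 0) else 0) = -(s' j') := by
      rw [Finset.sum_eq_single j']
      · rw [if_pos rfl, hs'def]
        dsimp only
        split_ifs with h
        · ring
        · ring
      · intro i _ hij
        rw [if_neg (Ne.symm hij), mul_zero]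
      · intro h
        exact absurd (Finset.mem_univ j') h
    rw [h3] at h0
    have h4 : ∑ x : Unit, t (Sum.inr (Sum.inr x)) * c j' = lam * c j' := by
      rw [Fintype.sum_unique]
    rw [h4] at h0
    have h5 : (-xbar) j' = -(xbar j') := rfl
    rw [h5] at h0
    have h6 : ∑ k, u k * A k j' = (∑ k, t (Sum.inl (Sum.inr k)) * A k j')
        - ∑ k, t (Sum.inl (Sum.inl k)) * A k j' := by
      rw [← Finset.sum_sub_distrib]
      apply Finset.sum_congr rfl
      intro k _
      rw [hudef]
      ring
    rw [h6]
    have h7 : ∑ k, t (Sum.inl (Sum.inr k)) * (-A k j')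
        = -∑ k, t (Sum.inl (Sum.inl k)) * A k j' + (∑ k, t (Sum.inl (Sum.inr k)) * (-A k j'))
          + ∑ k, t (Sum.inl (Sum.inl k)) * A k j' := by ring
    have h8 : ∑ k, t (Sum.inl (Sum.inr k)) * (-A k j')
        = -(∑ k, t (Sum.inl (Sum.inr k)) * A k j') := by
      rw [← Finset.sum_neg_distrib]
      apply Finset.sum_congr rfl
      intro k _
      ring
    rw [h8] at h0
    linarith
  -- key dot product identity
  have hkey : ∀ z : Fin n → ℝ, xbar ⬝ᵥ z
      = (∑ k, u k * (A *ᵥ z) k) + s' ⬝ᵥ z - lam * (c ⬝ᵥ z) := by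
    intro z
    have h1 : xbar ⬝ᵥ z
        = ∑ j', ((∑ k, u k * A k j') * z j' + s' j' * z j' - lam * c j' * z j') := by
      simp only [dotProduct]
      apply Finset.sum_congr rfl
      intro j' _
      rw [hrep j']
      ring
    rw [h1, Finset.sum_sub_distrib, Finset.sum_add_distrib]
    have h2 : ∑ j', (∑ k, u k * A k j') * z j' = ∑ k, u k * (A *ᵥ z) k := by
      simp only [Finset.sum_mul, mulVec, dotProduct, Finset.mul_sum]
      rw [Finset.sum_comm]
      apply Finset.sum_congr rfl
      intro k _
      apply Finset.sum_congr rfl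
      intro j' _
      ring
    have h4 : ∑ j', lam * c j' * z j' = lam * (c ⬝ᵥ z) := by
      simp only [dotProduct, Finset.mul_sum]
      apply Finset.sum_congr rfl
      intro j' _
      ring
    rw [h2, h4]
    rfl
  -- ### Step 5: conclusion
  refine ⟨lam + 1, by linarith, ?_⟩
  intro γ hγ x hx
  obtain ⟨⟨hxA, hxpos⟩, hxopt⟩ := hx
  refine ⟨⟨hxA, hxpos⟩, ?_⟩
  have hcxbar : c ⬝ᵥ xbar = pstar := le_antisymm hxbarc (hplow xbar hxbarA hxbarpos)
  have hiop := hxopt xbar hxbarA hxbarpos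
  rw [hcxbar] at hiop
  have hsq : 0 ≤ (x ⬝ᵥ x) - 2*(xbar ⬝ᵥ x) + (xbar ⬝ᵥ xbar) := by
    have h := Finset.sum_nonneg (fun j (_ : j ∈ Finset.univ) => mul_self_nonneg (x j - xbar j))
    have hexp : ∑ j, (x j - xbar j) * (x j - xbar j)
        = (x ⬝ᵥ x) - 2*(xbar ⬝ᵥ x) + (xbar ⬝ᵥ xbar) := by
      simp only [dotProduct, Finset.mul_sum, ← Finset.sum_sub_distrib, ← Finset.sum_add_distrib]
      apply Finset.sum_congr rfl
      intro j _
      ring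
    rw [hexp] at h
    exact h
  have hkx := hkey x
  have hkxbar := hkey xbar
  rw [hxA] at hkx
  rw [hxbarA] at hkxbar
  have hsx : 0 ≤ s' ⬝ᵥ x := Finset.sum_nonneg fun i _ => mul_nonneg (hs'pos i) (hxpos i)
  have hsxbar : s' ⬝ᵥ xbar = 0 := Finset.sum_eq_zero fun i _ => hs'z i
  rw [hsxbar, hcxbar] at hkxbar
  have hcx_ge : pstar ≤ c ⬝ᵥ x := hplow x hxA hxpos
  have hfinal : c ⬝ᵥ x ≤ pstar := by
    by_contra hgt
    push_neg at hgt
    have hprod : (1:ℝ) * (c ⬝ᵥ x - pstar) ≤ (γ - lam) * (c ⬝ᵥ x - pstar) :=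
      mul_le_mul_of_nonneg_right (by linarith) (by linarith)
    nlinarith [hiop, hsq, hkx, hkxbar, hsx, hprod]
  intro y hyA hypos
  exact le_trans hfinal (hplow y hyA hypos)
end

section
/- Suppose (x*,z*) satisfies the KKT conditions for (P₁), i.e., c + x* + Aᵀz* ≥ 0, Ax* = b, x* ≥ 0, and (c + x* + Aᵀz*)ᵀx* = 0, and let K > ‖c + x* + Aᵀz*‖_∞. Then (x*,z*) is a saddle point of L^K; in particular, L^K(x,z*) ≥ L^K(x*,z*) = cᵀx* + ½x*ᵀx* for all x ∈ ℝⁿ, and L^K(x*,z) = L^K(x*,z*) for all z ∈ ℝᵐ. -/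
open Matrix BigOperators

noncomputable def LK {n m : ℕ} (A : Matrix (Fin m) (Fin n) ℝ) (b : Fin m → ℝ)
    (c : Fin n → ℝ) (K : ℝ) (x : Fin n → ℝ) (z : Fin m → ℝ) : ℝ :=
  c ⬝ᵥ x + (1 / 2) * (x ⬝ᵥ x)
    + (1 / 2) * ((A *ᵥ x - b) ⬝ᵥ (A *ᵥ x - b))
    + z ⬝ᵥ (A *ᵥ x - b)
    + K * ∑ i, max 0 (-(x i))

noncomputable def fmap {n m : ℕ} (A : Matrix (Fin m) (Fin n) ℝ) (b : Fin m → ℝ)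
    (c : Fin n → ℝ) (x : Fin n → ℝ) (z : Fin m → ℝ) : Fin n → ℝ :=
  -(Aᵀ *ᵥ z + c + x) - Aᵀ *ᵥ (A *ᵥ x - b)

def sgm {n m : ℕ} (A : Matrix (Fin m) (Fin n) ℝ) (b : Fin m → ℝ)
    (c : Fin n → ℝ) (x : Fin n → ℝ) (z : Fin m → ℝ) : Set (Fin n) :=
  {i | 0 ≤ fmap A b c x z i ∨ 0 < x i}

open Classical in
noncomputable def ISet {ι : Type*} [Fintype ι] [DecidableEq ι] (S : Set ι) : Matrix ι ι ℝ :=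
  Matrix.diagonal fun i => if i ∈ S then 1 else 0

def IsSaddle {n m : ℕ} (A : Matrix (Fin m) (Fin n) ℝ) (b : Fin m → ℝ)
    (c : Fin n → ℝ) (K : ℝ) (xb : Fin n → ℝ) (zb : Fin m → ℝ) : Prop :=
  ∀ x z, LK A b c K xb z ≤ LK A b c K xb zb ∧ LK A b c K xb zb ≤ LK A b c K x zb

/-- If (x*,z*) satisfies the KKT conditions for (P₁) and K > ‖c + x* + Aᵀz*‖_∞,
then (x*,z*) is a saddle point of L^K: L^K(x,z*) ≥ L^K(x*,z*) = cᵀx* + ½x*ᵀx* for all x,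
and L^K(x*,z) = L^K(x*,z*) for all z.  (The norm on `Fin n → ℝ` is the sup norm.) -/
theorem KKT_gives_saddle (n m : ℕ) (c : Fin n → ℝ) (b : Fin m → ℝ)
    (A : Matrix (Fin m) (Fin n) ℝ) (xs : Fin n → ℝ) (zs : Fin m → ℝ) (K : ℝ)
    (hKKT1 : ∀ i, 0 ≤ (c + xs + Aᵀ *ᵥ zs) i)
    (hKKT2 : A *ᵥ xs = b)
    (hKKT3 : ∀ i, 0 ≤ xs i)
    (hKKT4 : (c + xs + Aᵀ *ᵥ zs) ⬝ᵥ xs = 0)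
    (hK : ‖c + xs + Aᵀ *ᵥ zs‖ < K) :
    (∀ x : Fin n → ℝ, LK A b c K xs zs ≤ LK A b c K x zs) ∧
    LK A b c K xs zs = c ⬝ᵥ xs + (1 / 2) * (xs ⬝ᵥ xs) ∧
    (∀ z : Fin m → ℝ, LK A b c K xs z = LK A b c K xs zs) := by
  set g := c + xs + Aᵀ *ᵥ zs with hg
  have hAxs : A *ᵥ xs - b = 0 := by rw [hKKT2]; simp
  have hpen : ∑ i, max 0 (-(xs i)) = 0 := by
    apply Finset.sum_eq_zero; intro i _
    simp [max_eq_left, neg_nonpos.mpr (hKKT3 i)]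
  have hval : LK A b c K xs zs = c ⬝ᵥ xs + (1 / 2) * (xs ⬝ᵥ xs) := by
    simp [LK, hAxs, hpen]
  refine ⟨?_, hval, fun z => by simp [LK, hAxs, hpen]⟩
  intro x
  rw [hval]
  have hgK : ∀ i, g i ≤ K := fun i => by
    have h1 : ‖g i‖ ≤ ‖g‖ := norm_le_pi_norm g i
    rw [Real.norm_eq_abs] at h1
    linarith [le_abs_self (g i)]
  have e1 : g ⬝ᵥ (x - xs) = c ⬝ᵥ x - c ⬝ᵥ xs + (xs ⬝ᵥ x - xs ⬝ᵥ xs)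
      + zs ⬝ᵥ (A *ᵥ x - b) := by
    have h2 : (Aᵀ *ᵥ zs) ⬝ᵥ (x - xs) = zs ⬝ᵥ (A *ᵥ x - b) := by
      rw [dotProduct_comm, Matrix.dotProduct_mulVec, Matrix.vecMul_transpose,
        ← hKKT2, ← Matrix.mulVec_sub, dotProduct_comm, Matrix.dotProduct_mulVec]
    rw [hg, add_dotProduct, add_dotProduct, dotProduct_sub, dotProduct_sub, h2]
  have e2 : (x - xs) ⬝ᵥ (x - xs) = x ⬝ᵥ x - 2 * (xs ⬝ᵥ x) + xs ⬝ᵥ xs := by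
    rw [sub_dotProduct, dotProduct_sub, dotProduct_sub, dotProduct_comm xs x]
    ring
  have hq1 : 0 ≤ (x - xs) ⬝ᵥ (x - xs) :=
    Finset.sum_nonneg fun i _ => mul_self_nonneg _
  have hq2 : 0 ≤ (A *ᵥ x - b) ⬝ᵥ (A *ᵥ x - b) :=
    Finset.sum_nonneg fun i _ => mul_self_nonneg _
  have hmain : 0 ≤ g ⬝ᵥ (x - xs) + K * ∑ i, max 0 (-(x i)) := by
    have hx : g ⬝ᵥ (x - xs) = g ⬝ᵥ x := by
      rw [dotProduct_sub, hKKT4]; ring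
    rw [hx, dotProduct, Finset.mul_sum, ← Finset.sum_add_distrib]
    apply Finset.sum_nonneg
    intro i _
    have hKKT1' : (0:ℝ) ≤ c i + xs i + (Aᵀ *ᵥ zs) i := hKKT1 i
    have hgK' : c i + xs i + (Aᵀ *ᵥ zs) i ≤ K := hgK i
    rcases le_or_gt 0 (x i) with h | h
    · have : max 0 (-(x i)) = 0 := max_eq_left (by linarith)
      rw [this]
      nlinarith [mul_nonneg (hKKT1 i) h]
    · have : max 0 (-(x i)) = -(x i) := max_eq_right (by linarith)
      rw [this]
      nlinarith [hKKT1 i, hgK i]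
  simp only [LK]
  nlinarith [e1, e2, hq1, hq2, hmain]
end

section
/- Suppose (x*,z*) satisfies the KKT conditions for (P₁), i.e., c + x* + Aᵀz* ≥ 0, Ax* = b, x* ≥ 0, and (c + x* + Aᵀz*)ᵀx* = 0, and let K > ‖c + x* + Aᵀz*‖_∞. If (x̄,z̄) is a saddle point of L^K, then x̄ = x*; in particular, x̄ is the unique solution of the regularized problem (P₁). -/
open Matrix BigOperators

private lemma dpnn {n : ℕ} (v : Fin n → ℝ) : 0 ≤ v ⬝ᵥ v :=
  Finset.sum_nonneg fun _ _ => mul_self_nonneg _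

private lemma LK_expand {n m : ℕ} (A : Matrix (Fin m) (Fin n) ℝ) (b : Fin m → ℝ)
    (c : Fin n → ℝ) (K : ℝ) (xs : Fin n → ℝ) (zs : Fin m → ℝ)
    (hKKT2 : A *ᵥ xs = b) (hKKT3 : ∀ i, 0 ≤ xs i)
    (hKKT4 : (c + xs + Aᵀ *ᵥ zs) ⬝ᵥ xs = 0) (x : Fin n → ℝ) :
    LK A b c K x zs = LK A b c K xs zs
      + (c + xs + Aᵀ *ᵥ zs) ⬝ᵥ x + K * ∑ i, max 0 (-(x i))
      + (1/2) * ((x - xs) ⬝ᵥ (x - xs))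
      + (1/2) * ((A *ᵥ (x - xs)) ⬝ᵥ (A *ᵥ (x - xs))) := by
  have hmax : ∑ i, max 0 (-(xs i)) = 0 :=
    Finset.sum_eq_zero fun i _ => max_eq_left (by linarith [hKKT3 i])
  have h1 : A *ᵥ x - b = A *ᵥ (x - xs) := by rw [Matrix.mulVec_sub, hKKT2]
  have htr : ∀ v : Fin n → ℝ, (Aᵀ *ᵥ zs) ⬝ᵥ v = zs ⬝ᵥ (A *ᵥ v) := fun v => by
    rw [Matrix.mulVec_transpose, Matrix.dotProduct_mulVec]
  simp only [LK, h1, hKKT2, sub_self, hmax, mul_zero, add_zero, dotProduct_zero]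
  have e1 : (x - xs) ⬝ᵥ (x - xs) = x ⬝ᵥ x - 2 * (xs ⬝ᵥ x) + xs ⬝ᵥ xs := by
    simp only [sub_dotProduct, dotProduct_sub, dotProduct_comm x xs]; ring
  have e2 : zs ⬝ᵥ (A *ᵥ (x - xs)) = (Aᵀ *ᵥ zs) ⬝ᵥ x - (Aᵀ *ᵥ zs) ⬝ᵥ xs := by
    rw [← htr, dotProduct_sub]
  have e3 : (c + xs + Aᵀ *ᵥ zs) ⬝ᵥ x = c ⬝ᵥ x + xs ⬝ᵥ x + (Aᵀ *ᵥ zs) ⬝ᵥ x := by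
    simp [add_dotProduct]
  have e4 : c ⬝ᵥ xs + xs ⬝ᵥ xs + (Aᵀ *ᵥ zs) ⬝ᵥ xs = 0 := by
    simpa [add_dotProduct] using hKKT4
  rw [e2, e3, e1]; linarith

/-- If (x*,z*) satisfies the KKT conditions for (P₁), K > ‖c + x* + Aᵀz*‖_∞,
and (x̄,z̄) is a saddle point of L^K, then x̄ = x*; in particular x̄ is the unique solution
of the regularized problem (P₁). -/
theorem saddle_gives_solution (n m : ℕ) (c : Fin n → ℝ) (b : Fin m → ℝ)
    (A : Matrix (Fin m) (Fin n) ℝ) (xs : Fin n → ℝ) (zs : Fin m → ℝ) (K : ℝ)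
    (hKKT1 : ∀ i, 0 ≤ (c + xs + Aᵀ *ᵥ zs) i)
    (hKKT2 : A *ᵥ xs = b)
    (hKKT3 : ∀ i, 0 ≤ xs i)
    (hKKT4 : (c + xs + Aᵀ *ᵥ zs) ⬝ᵥ xs = 0)
    (hK : ‖c + xs + Aᵀ *ᵥ zs‖ < K)
    (xb : Fin n → ℝ) (zb : Fin m → ℝ)
    (hsaddle : IsSaddle A b c K xb zb) :
    xb = xs ∧
    ((A *ᵥ xb = b ∧ ∀ i, 0 ≤ xb i) ∧
      ∀ y : Fin n → ℝ, A *ᵥ y = b → (∀ i, 0 ≤ y i) →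
        c ⬝ᵥ xb + (1 / 2) * (xb ⬝ᵥ xb) ≤ c ⬝ᵥ y + (1 / 2) * (y ⬝ᵥ y)) ∧
    (∀ y : Fin n → ℝ,
      ((A *ᵥ y = b ∧ ∀ i, 0 ≤ y i) ∧
        ∀ w : Fin n → ℝ, A *ᵥ w = b → (∀ i, 0 ≤ w i) →
          c ⬝ᵥ y + (1 / 2) * (y ⬝ᵥ y) ≤ c ⬝ᵥ w + (1 / 2) * (w ⬝ᵥ w)) → y = xb) := by
  set s := c + xs + Aᵀ *ᵥ zs with hs
  have hsK : ∀ i, s i < K := fun i =>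
    lt_of_le_of_lt (by calc s i ≤ |s i| := le_abs_self _
      _ ≤ ‖s‖ := by rw [← Real.norm_eq_abs]; exact norm_le_pi_norm s i) hK
  have hpos : ∀ x : Fin n → ℝ, 0 ≤ s ⬝ᵥ x + K * ∑ i, max 0 (-(x i)) := by
    intro x
    have heq : s ⬝ᵥ x + K * ∑ i, max 0 (-(x i))
        = ∑ i, (s i * x i + K * max 0 (-(x i))) := by
      simp only [dotProduct, Finset.mul_sum, ← Finset.sum_add_distrib]
    rw [heq]
    refine Finset.sum_nonneg fun i _ => ?_
    have h1 := hKKT1 i; have h2 := hsK i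
    rcases le_or_gt 0 (x i) with h | h
    · rw [max_eq_left (by linarith : -(x i) ≤ 0)]
      nlinarith
    · rw [max_eq_right (by linarith : (0:ℝ) ≤ -(x i))]
      nlinarith
  have key : ∀ x : Fin n → ℝ,
      LK A b c K xs zs + (1/2) * ((x - xs) ⬝ᵥ (x - xs)) ≤ LK A b c K x zs := by
    intro x
    rw [LK_expand A b c K xs zs hKKT2 hKKT3 hKKT4 x]
    have h1 := hpos x
    have h2 := dpnn (A *ᵥ (x - xs))
    linarith
  have hAxb : A *ᵥ xb = b := by
    have h := (hsaddle xb (zb + (A *ᵥ xb - b))).1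
    have hd : LK A b c K xb (zb + (A *ᵥ xb - b))
        = LK A b c K xb zb + (A *ᵥ xb - b) ⬝ᵥ (A *ᵥ xb - b) := by
      simp only [LK, add_dotProduct]; ring
    rw [hd] at h
    have h2 : (A *ᵥ xb - b) ⬝ᵥ (A *ᵥ xb - b) = 0 :=
      le_antisymm (by linarith) (dpnn _)
    exact sub_eq_zero.mp (dotProduct_self_eq_zero.mp h2)
  have hzinv : ∀ (x : Fin n → ℝ) (z z' : Fin m → ℝ), A *ᵥ x = b →
      LK A b c K x z = LK A b c K x z' := by
    intro x z z' hx; simp [LK, hx]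
  have hxbxs : xb = xs := by
    have h1 := key xb
    have h2 : LK A b c K xb zs = LK A b c K xb zb := hzinv _ _ _ hAxb
    have h3 : LK A b c K xb zb ≤ LK A b c K xs zb := (hsaddle xs zb).2
    have h4 : LK A b c K xs zb = LK A b c K xs zs := hzinv _ _ _ hKKT2
    have h5 : (xb - xs) ⬝ᵥ (xb - xs) = 0 :=
      le_antisymm (by linarith) (dpnn _)
    exact sub_eq_zero.mp (dotProduct_self_eq_zero.mp h5)
  have hfeas : ∀ y : Fin n → ℝ, A *ᵥ y = b → (∀ i, 0 ≤ y i) →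
      LK A b c K y zs = c ⬝ᵥ y + (1/2) * (y ⬝ᵥ y) := by
    intro y hy hy2
    have hmax : ∑ i, max 0 (-(y i)) = 0 :=
      Finset.sum_eq_zero fun i _ => max_eq_left (by linarith [hy2 i])
    simp [LK, hy, hmax]
  have hopt : ∀ y : Fin n → ℝ, A *ᵥ y = b → (∀ i, 0 ≤ y i) →
      c ⬝ᵥ xs + (1/2) * (xs ⬝ᵥ xs) + (1/2) * ((y - xs) ⬝ᵥ (y - xs))
        ≤ c ⬝ᵥ y + (1/2) * (y ⬝ᵥ y) := by
    intro y hy hy2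
    have h := key y
    rw [hfeas y hy hy2, hfeas xs hKKT2 hKKT3] at h
    linarith
  subst hxbxs
  refine ⟨rfl, ⟨⟨hKKT2, hKKT3⟩, fun y hy hy2 => ?_⟩, fun y ⟨⟨hy1, hy2⟩, hymin⟩ => ?_⟩
  · have h := hopt y hy hy2
    have := dpnn (y - xb)
    linarith
  · have h1 := hymin xb hKKT2 hKKT3
    have h2 := hopt y hy1 hy2
    have h5 : (y - xb) ⬝ᵥ (y - xb) = 0 := le_antisymm (by linarith) (dpnn _)
    exact sub_eq_zero.mp (dotProduct_self_eq_zero.mp h5)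
end

section
/- Assume x̂ ∈ ℝⁿ with x̂ ≥ 0, ẑ ∈ ℝᵐ, K ≥ ‖f(x̂,ẑ)‖_∞, and (x̄,z̄) is a saddle point of L^K with Ax̄ = b and x̄ ≥ 0. Set p̂ = σ(x̂,ẑ). Then for all x ∈ ℝⁿ and z ∈ ℝᵐ, with e_x = x − x̂ and e_z = z − ẑ: (x − x̄)ᵀ I_{p̂} f(x̂,ẑ) + (z − z̄)ᵀ(Ax̂ − b) ≤ −½(Ax̂ − b)ᵀ(Ax̂ − b) + e_xᵀ I_{p̂} f(x̂,ẑ) + e_zᵀ(Ax̂ − b). -/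
open Matrix BigOperators

/-- Bound on the Lie derivative of V₁ along the sample-and-hold flow:
(x−x̄)ᵀI_{p̂}f(x̂,ẑ) + (z−z̄)ᵀ(Ax̂−b)
  ≤ −½(Ax̂−b)ᵀ(Ax̂−b) + e_xᵀI_{p̂}f(x̂,ẑ) + e_zᵀ(Ax̂−b),
with e_x = x−x̂, e_z = z−ẑ, p̂ = σ(x̂,ẑ), provided x̂ ≥ 0, K ≥ ‖f(x̂,ẑ)‖_∞, and
(x̄,z̄) is a saddle point of L^K with Ax̄ = b, x̄ ≥ 0. -/
theorem V1_lie_derivative_bound (n m : ℕ) (c : Fin n → ℝ) (b : Fin m → ℝ)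
    (A : Matrix (Fin m) (Fin n) ℝ) (xh : Fin n → ℝ) (zh : Fin m → ℝ) (K : ℝ)
    (hxh : ∀ i, 0 ≤ xh i)
    (hK : ‖fmap A b c xh zh‖ ≤ K)
    (xb : Fin n → ℝ) (zb : Fin m → ℝ)
    (hsaddle : IsSaddle A b c K xb zb)
    (hAxb : A *ᵥ xb = b) (hxb : ∀ i, 0 ≤ xb i) :
    ∀ (x : Fin n → ℝ) (z : Fin m → ℝ),
      (x - xb) ⬝ᵥ (ISet (sgm A b c xh zh) *ᵥ fmap A b c xh zh)
        + (z - zb) ⬝ᵥ (A *ᵥ xh - b)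
      ≤ -(1 / 2) * ((A *ᵥ xh - b) ⬝ᵥ (A *ᵥ xh - b))
        + (x - xh) ⬝ᵥ (ISet (sgm A b c xh zh) *ᵥ fmap A b c xh zh)
        + (z - zh) ⬝ᵥ (A *ᵥ xh - b) := by
  classical
  -- notation
  have hgi : ∀ i, (ISet (sgm A b c xh zh) *ᵥ fmap A b c xh zh) i
      = (if i ∈ sgm A b c xh zh then 1 else 0) * fmap A b c xh zh i := by
    intro i; simp [ISet, Matrix.mulVec_diagonal]
  -- x̂ᵀ g = x̂ᵀ f
  have hxhg : xh ⬝ᵥ (ISet (sgm A b c xh zh) *ᵥ fmap A b c xh zh)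
      = xh ⬝ᵥ fmap A b c xh zh := by
    unfold dotProduct
    refine Finset.sum_congr rfl fun i _ => ?_
    rw [hgi i]
    by_cases h : i ∈ sgm A b c xh zh
    · simp [h]
    · have h' : ¬ (0 ≤ fmap A b c xh zh i ∨ 0 < xh i) := h
      push_neg at h'
      have : xh i = 0 := le_antisymm h'.2 (hxh i)
      simp [h, this]
  -- x̄ᵀ f ≤ x̄ᵀ g
  have hxbg : xb ⬝ᵥ fmap A b c xh zh
      ≤ xb ⬝ᵥ (ISet (sgm A b c xh zh) *ᵥ fmap A b c xh zh) := by
    unfold dotProduct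
    refine Finset.sum_le_sum fun i _ => ?_
    rw [hgi i]
    by_cases h : i ∈ sgm A b c xh zh
    · simp [h]
    · have h' : ¬ (0 ≤ fmap A b c xh zh i ∨ 0 < xh i) := h
      push_neg at h'
      rw [if_neg h, zero_mul, mul_zero]
      exact mul_nonpos_of_nonneg_of_nonpos (hxb i) h'.1.le
  -- max-term vanishes for nonneg vectors
  have hmaxb : ∑ i, max 0 (-(xb i)) = 0 :=
    Finset.sum_eq_zero fun i _ => max_eq_left (neg_nonpos.mpr (hxb i))
  have hmaxh : ∑ i, max 0 (-(xh i)) = 0 :=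
    Finset.sum_eq_zero fun i _ => max_eq_left (neg_nonpos.mpr (hxh i))
  -- saddle inequality, simplified
  have hsad := (hsaddle xh zb).2
  have h1 : LK A b c K xb zb = c ⬝ᵥ xb + (1 / 2) * (xb ⬝ᵥ xb) := by
    simp [LK, hAxb, hmaxb]
  have h2 : LK A b c K xh zb = c ⬝ᵥ xh + (1 / 2) * (xh ⬝ᵥ xh)
      + (1 / 2) * ((A *ᵥ xh - b) ⬝ᵥ (A *ᵥ xh - b)) + zb ⬝ᵥ (A *ᵥ xh - b) := by
    simp [LK, hmaxh]
  rw [h1, h2] at hsad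
  -- transpose dot-product identity
  have hAsub : A *ᵥ (xh - xb) = A *ᵥ xh - b := by
    rw [Matrix.mulVec_sub, hAxb]
  have hdt : ∀ v : Fin m → ℝ, (xh - xb) ⬝ᵥ (Aᵀ *ᵥ v) = (A *ᵥ xh - b) ⬝ᵥ v := by
    intro v
    rw [Matrix.dotProduct_mulVec, Matrix.vecMul_transpose, hAsub]
  -- expand (x̂ − x̄)ᵀ f
  have hexp : (xh - xb) ⬝ᵥ fmap A b c xh zh
      = -((A *ᵥ xh - b) ⬝ᵥ zh) - (xh - xb) ⬝ᵥ c - (xh - xb) ⬝ᵥ xh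
        - (A *ᵥ xh - b) ⬝ᵥ (A *ᵥ xh - b) := by
    unfold fmap
    rw [dotProduct_sub, dotProduct_neg, dotProduct_add, dotProduct_add, hdt, hdt]
    ring
  -- square nonneg
  have hsq : 0 ≤ (xh - xb) ⬝ᵥ (xh - xb) :=
    Finset.sum_nonneg fun i _ => mul_self_nonneg _
  -- the key scalar inequality
  have key : (xh - xb) ⬝ᵥ (ISet (sgm A b c xh zh) *ᵥ fmap A b c xh zh)
      + (zh - zb) ⬝ᵥ (A *ᵥ xh - b)
      + (1 / 2) * ((A *ᵥ xh - b) ⬝ᵥ (A *ᵥ xh - b)) ≤ 0 := by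
    have e1 : (xh - xb) ⬝ᵥ (ISet (sgm A b c xh zh) *ᵥ fmap A b c xh zh)
        ≤ (xh - xb) ⬝ᵥ fmap A b c xh zh := by
      rw [sub_dotProduct, sub_dotProduct]
      linarith [hxhg, hxbg]
    rw [hexp] at e1
    have e2 : (zh - zb) ⬝ᵥ (A *ᵥ xh - b)
        = zh ⬝ᵥ (A *ᵥ xh - b) - zb ⬝ᵥ (A *ᵥ xh - b) := sub_dotProduct _ _ _
    have e3 : (xh - xb) ⬝ᵥ c = c ⬝ᵥ xh - c ⬝ᵥ xb := by
      rw [sub_dotProduct, dotProduct_comm xh c, dotProduct_comm xb c]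
    have e4 : (xh - xb) ⬝ᵥ xh = xh ⬝ᵥ xh - xb ⬝ᵥ xh := sub_dotProduct _ _ _
    have e5 : (A *ᵥ xh - b) ⬝ᵥ zh = zh ⬝ᵥ (A *ᵥ xh - b) := dotProduct_comm _ _
    have e6 : (xh - xb) ⬝ᵥ (xh - xb)
        = xh ⬝ᵥ xh - 2 * (xb ⬝ᵥ xh) + xb ⬝ᵥ xb := by
      rw [sub_dotProduct, dotProduct_sub, dotProduct_sub,
        dotProduct_comm xh xb]
      ring
    rw [e6] at hsq
    rw [e3, e4, e5] at e1
    linarith [hsad, e1, hsq, e2.le, e2.ge]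
  intro x z
  have ex : (x - xb) ⬝ᵥ (ISet (sgm A b c xh zh) *ᵥ fmap A b c xh zh)
      - (x - xh) ⬝ᵥ (ISet (sgm A b c xh zh) *ᵥ fmap A b c xh zh)
      = (xh - xb) ⬝ᵥ (ISet (sgm A b c xh zh) *ᵥ fmap A b c xh zh) := by
    rw [sub_dotProduct, sub_dotProduct, sub_dotProduct]; ring
  have ez : (z - zb) ⬝ᵥ (A *ᵥ xh - b) - (z - zh) ⬝ᵥ (A *ᵥ xh - b)
      = (zh - zb) ⬝ᵥ (A *ᵥ xh - b) := by
    rw [sub_dotProduct, sub_dotProduct, sub_dotProduct]; ring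
  linarith [key, ex.le, ex.ge, ez.le, ez.ge]
end

section
/- Assume ρ(AᵀA) ≤ 1 (ρ the spectral radius), x̂ ∈ ℝⁿ with x̂ ≥ 0, ẑ ∈ ℝᵐ, K ≥ ‖f(x̂,ẑ)‖_∞, and (x̄,z̄) is a saddle point of L^K with Ax̄ = b and x̄ ≥ 0. Let x ∈ ℝⁿ, z ∈ ℝᵐ, set p = σ(x,z), p̂ = σ(x̂,ẑ), e_x = x − x̂, e_z = z − ẑ, and assume p̂ ⊆ p. Then the quantity 𝓛 := (x − x̄)ᵀ I_{p̂} f(x̂,ẑ) + (z − z̄)ᵀ(Ax̂ − b) − f(x,z)ᵀ I_p (AᵀA + I) I_{p̂} f(x̂,ẑ) − f(x,z)ᵀ I_p Aᵀ(Ax̂ − b) + (Ax − b)ᵀ A I_{p̂} f(x̂,ẑ) (which is the Lie derivative of the Lyapunov function V = V₁ + V₂ along the sample-and-hold flow F(x̂,ẑ) = (I_{p̂} f(x̂,ẑ), Ax̂ − b) whenever that Lie derivative exists) satisfies 𝓛 ≤ −½ f(x̂,ẑ)ᵀ I_{p̂} f(x̂,ẑ) − ¼ (Ax̂ − b)ᵀ(Ax̂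 − b) + 40 e_xᵀe_x + 20 e_zᵀe_z + 15 f(x,z)ᵀ I_{p∖p̂} f(x,z). -/
open Matrix BigOperators
open scoped Pointwise

set_option maxHeartbeats 2000000

/-! ### auxiliary norm API -/

noncomputable def nm {k : ℕ} (v : Fin k → ℝ) : ℝ := Real.sqrt (v ⬝ᵥ v)

lemma dot_self_nonneg {k : ℕ} (v : Fin k → ℝ) : 0 ≤ v ⬝ᵥ v :=
  Finset.sum_nonneg fun _ _ => mul_self_nonneg _

lemma nm_nonneg {k : ℕ} (v : Fin k → ℝ) : 0 ≤ nm v := Real.sqrt_nonneg _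

lemma nm_sq {k : ℕ} (v : Fin k → ℝ) : nm v * nm v = v ⬝ᵥ v :=
  Real.mul_self_sqrt (dot_self_nonneg v)

lemma nm_neg {k : ℕ} (v : Fin k → ℝ) : nm (-v) = nm v := by
  unfold nm; congr 1; simp [dotProduct]

lemma dot_le_nm {k : ℕ} (u v : Fin k → ℝ) : u ⬝ᵥ v ≤ nm u * nm v := by
  have h2 : (u ⬝ᵥ v) ^ 2 ≤ (u ⬝ᵥ u) * (v ⬝ᵥ v) := by
    simpa [dotProduct, sq] using Finset.sum_mul_sq_le_sq_mul_sq Finset.univ u v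
  have h3 : u ⬝ᵥ v ≤ Real.sqrt ((u ⬝ᵥ u) * (v ⬝ᵥ v)) := by
    calc u ⬝ᵥ v ≤ |u ⬝ᵥ v| := le_abs_self _
    _ = Real.sqrt ((u ⬝ᵥ v) ^ 2) := (Real.sqrt_sq_eq_abs _).symm
    _ ≤ Real.sqrt ((u ⬝ᵥ u) * (v ⬝ᵥ v)) := Real.sqrt_le_sqrt h2
  rwa [Real.sqrt_mul (dot_self_nonneg u)] at h3

lemma nm_le_of_dot_le {k l : ℕ} {u : Fin k → ℝ} {v : Fin l → ℝ}
    (h : u ⬝ᵥ u ≤ v ⬝ᵥ v) : nm u ≤ nm v :=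
  Real.sqrt_le_sqrt h

lemma nm_add_le {k : ℕ} (u v : Fin k → ℝ) : nm (u + v) ≤ nm u + nm v := by
  have hexp : (u + v) ⬝ᵥ (u + v) = u ⬝ᵥ u + 2 * (u ⬝ᵥ v) + v ⬝ᵥ v := by
    simp only [add_dotProduct, dotProduct_add]
    rw [dotProduct_comm v u]; ring
  have h1 : (u + v) ⬝ᵥ (u + v) ≤ (nm u + nm v) * (nm u + nm v) := by
    rw [hexp]
    nlinarith [nm_sq u, nm_sq v, dot_le_nm u v]
  have h2 : nm (u + v) ≤ Real.sqrt ((nm u + nm v) * (nm u + nm v)) :=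
    Real.sqrt_le_sqrt h1
  rwa [Real.sqrt_mul_self (add_nonneg (nm_nonneg u) (nm_nonneg v))] at h2

lemma dot_bound {k : ℕ} {u v : Fin k → ℝ} {a b : ℝ} (hu : nm u ≤ a) (hv : nm v ≤ b) :
    u ⬝ᵥ v ≤ a * b :=
  (dot_le_nm u v).trans (mul_le_mul hu hv (nm_nonneg v) ((nm_nonneg u).trans hu))

lemma dot_bound_neg {k : ℕ} {u v : Fin k → ℝ} {a b : ℝ} (hu : nm u ≤ a) (hv : nm v ≤ b) :
    -(a * b) ≤ u ⬝ᵥ v := by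
  have h := dot_bound (u := -u) (v := v) (a := a) (b := b) (by rwa [nm_neg]) hv
  rw [neg_dotProduct] at h
  linarith

lemma opbound {n m : ℕ} {A : Matrix (Fin m) (Fin n) ℝ}
    (hρ : spectralRadius ℝ (Aᵀ * A) ≤ 1) (v : Fin n → ℝ) :
    (A *ᵥ v) ⬝ᵥ (A *ᵥ v) ≤ v ⬝ᵥ v := by
  have hH : (1 - Aᵀ * A).IsHermitian := by
    have h2 : (Aᵀ * A).IsHermitian := by
      simpa [Matrix.conjTranspose_eq_transpose_of_trivial] using
        (Matrix.posSemidef_conjTranspose_mul_self (R := ℝ) A).1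
    simpa using Matrix.IsHermitian.sub (Matrix.isHermitian_one) h2
  have hps : (1 - Aᵀ * A).PosSemidef := by
    rw [hH.posSemidef_iff_eigenvalues_nonneg]
    intro i
    show (0:ℝ) ≤ hH.eigenvalues i
    have hmem := hH.eigenvalues_mem_spectrum_real i
    have hset : spectrum ℝ ((1 : Matrix (Fin n) (Fin n) ℝ) - Aᵀ * A)
        = ({(1:ℝ)} : Set ℝ) - spectrum ℝ (Aᵀ * A) := by
      simpa using (spectrum.singleton_sub_eq (Aᵀ * A) (1:ℝ)).symm
    rw [hset] at hmem
    obtain ⟨xx, hx1, yy, hy, hxy⟩ := Set.mem_sub.mp hmem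
    rcases Set.mem_singleton_iff.mp hx1 with rfl
    have h1 : (‖yy‖₊ : ENNReal) ≤ spectralRadius ℝ (Aᵀ * A) :=
      le_iSup₂ (f := fun k (_ : k ∈ spectrum ℝ (Aᵀ * A)) => (‖k‖₊ : ENNReal)) yy hy
    have h2 : (‖yy‖₊ : ENNReal) ≤ 1 := h1.trans hρ
    have h3 : |yy| ≤ 1 := by
      rw [← ENNReal.coe_one, ENNReal.coe_le_coe] at h2
      simpa [← NNReal.coe_le_coe, Real.norm_eq_abs] using h2
    rw [← hxy]
    linarith [(abs_le.mp h3).2]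
  have hv := hps.dotProduct_mulVec_nonneg v
  have hstar : star v = v := by simp
  rw [hstar, Matrix.sub_mulVec, Matrix.one_mulVec, dotProduct_sub] at hv
  have hadj : v ⬝ᵥ ((Aᵀ * A) *ᵥ v) = (A *ᵥ v) ⬝ᵥ (A *ᵥ v) := by
    rw [← Matrix.mulVec_mulVec, Matrix.dotProduct_mulVec, Matrix.vecMul_transpose]
  linarith [hadj ▸ hv]

lemma nm_mulVec_le {n m : ℕ} {A : Matrix (Fin m) (Fin n) ℝ}
    (hρ : spectralRadius ℝ (Aᵀ * A) ≤ 1) (v : Fin n → ℝ) :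
    nm (A *ᵥ v) ≤ nm v :=
  nm_le_of_dot_le (opbound hρ v)

lemma nm_transpose_mulVec_le {n m : ℕ} {A : Matrix (Fin m) (Fin n) ℝ}
    (hρ : spectralRadius ℝ (Aᵀ * A) ≤ 1) (u : Fin m → ℝ) :
    nm (Aᵀ *ᵥ u) ≤ nm u := by
  have h2 : (Aᵀ *ᵥ u) ⬝ᵥ (Aᵀ *ᵥ u) = (A *ᵥ (Aᵀ *ᵥ u)) ⬝ᵥ u := by
    rw [Matrix.dotProduct_mulVec, Matrix.vecMul_transpose]
  have h3 : (A *ᵥ (Aᵀ *ᵥ u)) ⬝ᵥ u ≤ nm (Aᵀ *ᵥ u) * nm u :=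
    dot_bound (nm_mulVec_le hρ _) (le_refl _)
  have h4 : nm (Aᵀ *ᵥ u) * nm (Aᵀ *ᵥ u) ≤ nm (Aᵀ *ᵥ u) * nm u := by
    rw [nm_sq, h2]; exact h3
  rcases eq_or_lt_of_le (nm_nonneg (Aᵀ *ᵥ u)) with h | h
  · rw [← h]; exact nm_nonneg u
  · exact le_of_mul_le_mul_left h4 h

lemma nm_ISet_le {k : ℕ} (S : Set (Fin k)) (v : Fin k → ℝ) :
    nm (ISet S *ᵥ v) ≤ nm v := by
  apply nm_le_of_dot_le
  unfold dotProduct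
  apply Finset.sum_le_sum
  intro i _
  classical
  simp only [ISet, Matrix.mulVec_diagonal]
  by_cases h : i ∈ S <;> simp [h] <;> nlinarith [mul_self_nonneg (v i)]

lemma dot_ISet_swap {k : ℕ} (S : Set (Fin k)) (u v : Fin k → ℝ) :
    u ⬝ᵥ (ISet S *ᵥ v) = (ISet S *ᵥ u) ⬝ᵥ v := by
  classical
  unfold dotProduct
  apply Finset.sum_congr rfl
  intro i _
  simp only [ISet, Matrix.mulVec_diagonal]
  ring

lemma dot_ISet_self {k : ℕ} (S : Set (Fin k)) (v : Fin k → ℝ) :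
    (ISet S *ᵥ v) ⬝ᵥ (ISet S *ᵥ v) = v ⬝ᵥ (ISet S *ᵥ v) := by
  classical
  unfold dotProduct
  apply Finset.sum_congr rfl
  intro i _
  simp only [ISet, Matrix.mulVec_diagonal]
  by_cases h : i ∈ S <;> simp [h]

lemma sqaux1 (a bb Q G : ℝ) : (6*a + 2*bb + 2*Q) * G
    ≤ 1/2 * (G*G) + 1/2 * (6*a + 2*bb + 2*Q)^2 := by
  nlinarith [sq_nonneg (G - (6*a + 2*bb + 2*Q))]

lemma sqaux2 (a bb Q H : ℝ) : (2*a + 2*bb + Q) * H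
    ≤ 1/4 * (H*H) + (2*a + 2*bb + Q)^2 := by
  nlinarith [sq_nonneg (H - (4*a + 4*bb + 2*Q))]

lemma sqaux3 (a bb Q : ℝ) : 1/2 * (6*a + 2*bb + 2*Q)^2 + (2*a + 2*bb + Q)^2
    ≤ 40*(a*a) + 20*(bb*bb) + 15*(Q*Q) := by
  nlinarith [sq_nonneg (a - bb), sq_nonneg (a - Q), sq_nonneg (bb - Q)]

/-- Bound on the Lie derivative of the Lyapunov function V = V₁ + V₂ along the
sample-and-hold flow F(x̂,ẑ) = (I_{p̂}f(x̂,ẑ), Ax̂−b), under ρ(AᵀA) ≤ 1, x̂ ≥ 0,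
K ≥ ‖f(x̂,ẑ)‖_∞, (x̄,z̄) a saddle point of L^K with Ax̄ = b, x̄ ≥ 0, and p̂ ⊆ p. -/
theorem lie_derivative_V_bound (n m : ℕ) (c : Fin n → ℝ) (b : Fin m → ℝ)
    (A : Matrix (Fin m) (Fin n) ℝ)
    (hρ : spectralRadius ℝ (Aᵀ * A) ≤ 1)
    (xh : Fin n → ℝ) (zh : Fin m → ℝ) (K : ℝ)
    (hxh : ∀ i, 0 ≤ xh i)
    (hK : ‖fmap A b c xh zh‖ ≤ K)
    (xb : Fin n → ℝ) (zb : Fin m → ℝ)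
    (hsaddle : IsSaddle A b c K xb zb)
    (hAxb : A *ᵥ xb = b) (hxb : ∀ i, 0 ≤ xb i)
    (x : Fin n → ℝ) (z : Fin m → ℝ)
    (hsub : sgm A b c xh zh ⊆ sgm A b c x z) :
    (x - xb) ⬝ᵥ (ISet (sgm A b c xh zh) *ᵥ fmap A b c xh zh)
      + (z - zb) ⬝ᵥ (A *ᵥ xh - b)
      - fmap A b c x z ⬝ᵥ (ISet (sgm A b c x z) *ᵥ
          ((Aᵀ * A + 1) *ᵥ (ISet (sgm A b c xh zh) *ᵥ fmap A b c xh zh)))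
      - fmap A b c x z ⬝ᵥ (ISet (sgm A b c x z) *ᵥ (Aᵀ *ᵥ (A *ᵥ xh - b)))
      + (A *ᵥ x - b) ⬝ᵥ (A *ᵥ (ISet (sgm A b c xh zh) *ᵥ fmap A b c xh zh))
    ≤ -(1 / 2) * (fmap A b c xh zh ⬝ᵥ (ISet (sgm A b c xh zh) *ᵥ fmap A b c xh zh))
      - (1 / 4) * ((A *ᵥ xh - b) ⬝ᵥ (A *ᵥ xh - b))
      + 40 * ((x - xh) ⬝ᵥ (x - xh))
      + 20 * ((z - zh) ⬝ᵥ (z - zh))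
      + 15 * (fmap A b c x z ⬝ᵥ (ISet (sgm A b c x z \ sgm A b c xh zh) *ᵥ fmap A b c x z)) := by
  classical
  set fh := fmap A b c xh zh with hfh
  set fz := fmap A b c x z with hfz
  set ph := sgm A b c xh zh with hph
  set pz := sgm A b c x z with hpz
  set gh := ISet ph *ᵥ fh with hgh
  set hh := A *ᵥ xh - b with hhh
  set g := ISet pz *ᵥ fz with hg
  set q := ISet (pz \ ph) *ᵥ fz with hq
  set ex := x - xh with hex
  set ez := z - zh with hez
  set w := ex + Aᵀ *ᵥ (A *ᵥ ex) + Aᵀ *ᵥ ez with hw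
  set d := g - gh with hd
  -- adjoint identity
  have hadj : ∀ (v : Fin n → ℝ) (u : Fin m → ℝ), v ⬝ᵥ (Aᵀ *ᵥ u) = (A *ᵥ v) ⬝ᵥ u := by
    intro v u
    rw [Matrix.dotProduct_mulVec, Matrix.vecMul_transpose]
  have hIz : ∀ (u : Fin n → ℝ), fz ⬝ᵥ (ISet pz *ᵥ u) = g ⬝ᵥ u := by
    intro u
    rw [dot_ISet_swap]
  have hmem_ph : ∀ i, i ∈ ph ↔ (0 ≤ fh i ∨ 0 < xh i) := fun i => Iff.rfl
  -- F1 : fz = fh - w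
  have F1 : fz = fh - w := by
    rw [hfz, hfh, hw, hex, hez]
    show fmap A b c x z = fmap A b c xh zh -
      ((x - xh) + Aᵀ *ᵥ (A *ᵥ (x - xh)) + Aᵀ *ᵥ (z - zh))
    unfold fmap
    simp only [Matrix.mulVec_sub, Matrix.mulVec_add]
    ext i
    simp only [Pi.sub_apply, Pi.add_apply, Pi.neg_apply]
    ring
  -- F2 : d = q - ISet ph *ᵥ w
  have F2 : d = q - ISet ph *ᵥ w := by
    rw [hd, hg, hq, hgh]
    ext i
    have h4 : fz i = fh i - w i := by rw [F1]; simp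
    simp only [Pi.sub_apply, ISet, Matrix.mulVec_diagonal]
    by_cases h1 : i ∈ ph
    · have h2 : i ∈ pz := hsub h1
      have h3 : i ∉ pz \ ph := by simp [h1]
      simp [h1, h2, h3, h4]
    · by_cases h2 : i ∈ pz
      · have h3 : i ∈ pz \ ph := Set.mem_diff_of_mem h2 h1
        simp [h1, h2, h3]
      · have h3 : i ∉ pz \ ph := fun hc => h2 hc.1
        simp [h1, h2, h3]
  -- scalar abbreviations
  set a := nm ex with ha
  set bb := nm ez with hbb
  set Q := nm q with hQ
  set G := nm gh with hG
  set H := nm hh with hH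
  set D := nm d with hD
  -- norm bounds
  have hAop : ∀ v : Fin n → ℝ, nm (A *ᵥ v) ≤ nm v := nm_mulVec_le hρ
  have hATop : ∀ u : Fin m → ℝ, nm (Aᵀ *ᵥ u) ≤ nm u := nm_transpose_mulVec_le hρ
  have hwbound : nm w ≤ 2 * a + bb := by
    rw [hw]
    calc nm (ex + Aᵀ *ᵥ (A *ᵥ ex) + Aᵀ *ᵥ ez)
        ≤ nm (ex + Aᵀ *ᵥ (A *ᵥ ex)) + nm (Aᵀ *ᵥ ez) := nm_add_le _ _
      _ ≤ (nm ex + nm (Aᵀ *ᵥ (A *ᵥ ex))) + nm (Aᵀ *ᵥ ez) := by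
          linarith [nm_add_le ex (Aᵀ *ᵥ (A *ᵥ ex))]
      _ ≤ 2 * a + bb := by
          have h1 : nm (Aᵀ *ᵥ (A *ᵥ ex)) ≤ nm ex := (hATop _).trans (hAop _)
          have h2 : nm (Aᵀ *ᵥ ez) ≤ nm ez := hATop _
          rw [← ha, ← hbb] at *
          linarith
  have hDbound : D ≤ 2 * a + bb + Q := by
    rw [hD, F2]
    calc nm (q - ISet ph *ᵥ w) = nm (q + -(ISet ph *ᵥ w)) := by rw [sub_eq_add_neg]
      _ ≤ nm q + nm (-(ISet ph *ᵥ w)) := nm_add_le _ _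
      _ = nm q + nm (ISet ph *ᵥ w) := by rw [nm_neg]
      _ ≤ Q + nm w := by rw [← hQ]; linarith [nm_ISet_le ph w]
      _ ≤ 2 * a + bb + Q := by linarith [hwbound]
  -- saddle point step
  have hSaddleStep : (xh - xb) ⬝ᵥ gh + (zh - zb) ⬝ᵥ hh ≤ -(1/2) * (hh ⬝ᵥ hh) := by
    have hS1 : (xh - xb) ⬝ᵥ gh ≤ (xh - xb) ⬝ᵥ fh := by
      have hkey : 0 ≤ (xh - xb) ⬝ᵥ (fh - gh) := by
        unfold dotProduct
        apply Finset.sum_nonneg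
        intro i _
        rw [hgh]
        simp only [Pi.sub_apply, ISet, Matrix.mulVec_diagonal]
        by_cases h1 : i ∈ ph
        · simp [h1]
        · have h2 : ¬ (0 ≤ fh i ∨ 0 < xh i) := by rw [← hmem_ph]; exact h1
          push_neg at h2
          have hfhi : fh i < 0 := h2.1
          have hxhi : xh i = 0 := le_antisymm h2.2 (hxh i)
          simp only [h1, if_false, zero_mul, mul_zero, sub_zero, hxhi, zero_sub]
          nlinarith [mul_nonneg (hxb i) (neg_nonneg.mpr hfhi.le)]
      have hd2 : (xh - xb) ⬝ᵥ (fh - gh) = (xh - xb) ⬝ᵥ fh - (xh - xb) ⬝ᵥ gh :=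
        dotProduct_sub _ _ _
      linarith [hd2 ▸ hkey]
    have hAd : ∀ u : Fin m → ℝ, (xh - xb) ⬝ᵥ (Aᵀ *ᵥ u) = hh ⬝ᵥ u := by
      intro u
      rw [hadj]
      congr 1
      rw [Matrix.mulVec_sub, hAxb, hhh]
    have e1 : (xh - xb) ⬝ᵥ fh
        = -(hh ⬝ᵥ zh) - ((xh - xb) ⬝ᵥ c) - ((xh - xb) ⬝ᵥ xh) - hh ⬝ᵥ hh := by
      have hfh2 : fh = -(Aᵀ *ᵥ zh + c + xh) - Aᵀ *ᵥ hh := by rw [hfh, hhh]; rfl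
      rw [hfh2, dotProduct_sub, dotProduct_neg, dotProduct_add, dotProduct_add, hAd, hAd]
      ring
    have hcc : (xh - xb) ⬝ᵥ c = c ⬝ᵥ xh - c ⬝ᵥ xb := by
      rw [sub_dotProduct, dotProduct_comm xh c, dotProduct_comm xb c]
    have hzz : (zh - zb) ⬝ᵥ hh = zh ⬝ᵥ hh - zb ⬝ᵥ hh := sub_dotProduct _ _ _
    have hcz : hh ⬝ᵥ zh = zh ⬝ᵥ hh := dotProduct_comm _ _
    have hxx : (xh - xb) ⬝ᵥ xh = xh ⬝ᵥ xh - xb ⬝ᵥ xh := sub_dotProduct _ _ _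
    have hpen_xb : ∑ i, max 0 (-(xb i)) = 0 :=
      Finset.sum_eq_zero fun i _ => max_eq_left (neg_nonpos.mpr (hxb i))
    have hpen_xh : ∑ i, max 0 (-(xh i)) = 0 :=
      Finset.sum_eq_zero fun i _ => max_eq_left (neg_nonpos.mpr (hxh i))
    have hzero : A *ᵥ xb - b = 0 := by rw [hAxb]; simp
    have hsp' : c ⬝ᵥ xb + (1/2) * (xb ⬝ᵥ xb)
        ≤ c ⬝ᵥ xh + (1/2) * (xh ⬝ᵥ xh) + (1/2) * (hh ⬝ᵥ hh) + zb ⬝ᵥ hh := by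
      have hsp := (hsaddle xh zh).2
      unfold LK at hsp
      rw [hzero] at hsp
      simp only [dotProduct_zero, zero_dotProduct, hpen_xb, hpen_xh, mul_zero,
        add_zero] at hsp
      rw [← hhh] at hsp
      linarith
    have hsqx : 0 ≤ xh ⬝ᵥ xh - 2 * (xb ⬝ᵥ xh) + xb ⬝ᵥ xb := by
      have h := dot_self_nonneg (xh - xb)
      have hexp : (xh - xb) ⬝ᵥ (xh - xb)
          = xh ⬝ᵥ xh - 2 * (xb ⬝ᵥ xh) + xb ⬝ᵥ xb := by
        rw [sub_dotProduct, dotProduct_sub, dotProduct_sub, dotProduct_comm xh xb]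
        ring
      linarith [hexp ▸ h]
    linarith
  -- Cauchy–Schwarz style bounds
  have cb1 : ex ⬝ᵥ gh ≤ a * G := dot_bound (le_refl _) (le_refl _)
  have cb2 : ez ⬝ᵥ hh ≤ bb * H := dot_bound (le_refl _) (le_refl _)
  have cb3 : -(D * G) ≤ d ⬝ᵥ gh := dot_bound_neg (le_refl _) (le_refl _)
  have cb4 : -(D * G) ≤ (A *ᵥ d) ⬝ᵥ (A *ᵥ gh) := dot_bound_neg (hAop d) (hAop gh)
  have cb5 : -(D * H) ≤ (A *ᵥ d) ⬝ᵥ hh := dot_bound_neg (hAop d) (le_refl _)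
  have cb6 : (A *ᵥ ex) ⬝ᵥ (A *ᵥ gh) ≤ a * G := dot_bound (hAop ex) (hAop gh)
  have hDG : D * G ≤ (2 * a + bb + Q) * G :=
    mul_le_mul_of_nonneg_right hDbound (nm_nonneg gh)
  have hDH : D * H ≤ (2 * a + bb + Q) * H :=
    mul_le_mul_of_nonneg_right hDbound (nm_nonneg hh)
  have ha2 : a * a = ex ⬝ᵥ ex := nm_sq ex
  have hbb2 : bb * bb = ez ⬝ᵥ ez := nm_sq ez
  have hQ2 : Q * Q = q ⬝ᵥ q := nm_sq q
  have hG2 : G * G = gh ⬝ᵥ gh := nm_sq gh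
  have hH2 : H * H = hh ⬝ᵥ hh := nm_sq hh
  have hAgh : 0 ≤ (A *ᵥ gh) ⬝ᵥ (A *ᵥ gh) := dot_self_nonneg _
  have hrhs1 : fh ⬝ᵥ gh = gh ⬝ᵥ gh := (dot_ISet_self ph fh).symm
  have hrhs2 : fz ⬝ᵥ q = q ⬝ᵥ q := (dot_ISet_self (pz \ ph) fz).symm
  -- main expansion of LHS
  rw [hIz, hIz]
  have h21 : (Aᵀ * A + 1) *ᵥ gh = Aᵀ *ᵥ (A *ᵥ gh) + gh := by
    rw [Matrix.add_mulVec, Matrix.one_mulVec, ← Matrix.mulVec_mulVec]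
  rw [h21, dotProduct_add, hadj, hadj]
  have hx1 : (x - xb) ⬝ᵥ gh = ex ⬝ᵥ gh + (xh - xb) ⬝ᵥ gh := by
    have hxe : x - xb = ex + (xh - xb) := by
      rw [hex]; ext i; simp only [Pi.add_apply, Pi.sub_apply]; ring
    rw [hxe, add_dotProduct]
  have hz1 : (z - zb) ⬝ᵥ hh = ez ⬝ᵥ hh + (zh - zb) ⬝ᵥ hh := by
    have hze : z - zb = ez + (zh - zb) := by
      rw [hez]; ext i; simp only [Pi.add_apply, Pi.sub_apply]; ring
    rw [hze, add_dotProduct]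
  have hx2 : (A *ᵥ x - b) ⬝ᵥ (A *ᵥ gh) = (A *ᵥ ex) ⬝ᵥ (A *ᵥ gh) + hh ⬝ᵥ (A *ᵥ gh) := by
    have hAx : A *ᵥ x - b = A *ᵥ ex + hh := by
      rw [hex, hhh, Matrix.mulVec_sub]
      ext i; simp only [Pi.add_apply, Pi.sub_apply]; ring
    rw [hAx, add_dotProduct]
  have hgd : g = d + gh := by rw [hd]; ext i; simp
  have hga : (A *ᵥ g) ⬝ᵥ (A *ᵥ gh)
      = (A *ᵥ d) ⬝ᵥ (A *ᵥ gh) + (A *ᵥ gh) ⬝ᵥ (A *ᵥ gh) := by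
    rw [hgd, Matrix.mulVec_add, add_dotProduct]
  have hgb : (A *ᵥ g) ⬝ᵥ hh = (A *ᵥ d) ⬝ᵥ hh + (A *ᵥ gh) ⬝ᵥ hh := by
    rw [hgd, Matrix.mulVec_add, add_dotProduct]
  have hgc : g ⬝ᵥ gh = d ⬝ᵥ gh + gh ⬝ᵥ gh := by
    rw [hgd, add_dotProduct]
  have hcm : hh ⬝ᵥ (A *ᵥ gh) = (A *ᵥ gh) ⬝ᵥ hh := dotProduct_comm _ _
  rw [hx1, hz1, hx2, hga, hgb, hgc, hcm]
  -- final arithmetic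
  have hsq1 := sqaux1 a bb Q G
  have hsq2 := sqaux2 a bb Q H
  have hres := sqaux3 a bb Q
  linarith [hSaddleStep, cb1, cb2, cb3, cb4, cb5, cb6, hDG, hDH, ha2, hbb2, hQ2,
    hG2, hH2, hAgh, hrhs1, hrhs2, hsq1, hsq2, hres]
end

section
/- Let A ∈ ℝ^{m×n} with spectral radius ρ(AᵀA) ≤ 1, and let D ∈ ℝ^{n×n} be a diagonal matrix whose diagonal entries all lie in {0,1}. Then for every u ∈ ℝᵐ, v ∈ ℝⁿ, and κ > 0: uᵀ A D AᵀA D v ≤ (1/(2κ)) uᵀu + (κ/2) vᵀ D v. -/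
open Matrix BigOperators

private lemma young_dot {m : ℕ} (u w : Fin m → ℝ) (κ : ℝ) (hκ : 0 < κ) :
    u ⬝ᵥ w ≤ (1 / (2 * κ)) * (u ⬝ᵥ u) + (κ / 2) * (w ⬝ᵥ w) := by
  have h : (0:ℝ) ≤ ∑ i, (u i - κ * w i) ^ 2 := Finset.sum_nonneg fun i _ => sq_nonneg _
  have hexp : ∑ i, (u i - κ * w i) ^ 2
      = (u ⬝ᵥ u) - 2 * κ * (u ⬝ᵥ w) + κ ^ 2 * (w ⬝ᵥ w) := by
    simp only [dotProduct, Finset.mul_sum, ← Finset.sum_sub_distrib, ← Finset.sum_add_distrib]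
    apply Finset.sum_congr rfl; intro i _; ring
  have key : 2 * κ * (u ⬝ᵥ w) ≤ (u ⬝ᵥ u) + κ ^ 2 * (w ⬝ᵥ w) := by nlinarith [h, hexp]
  have hrhs : (1 / (2 * κ)) * (u ⬝ᵥ u) + (κ / 2) * (w ⬝ᵥ w)
      = ((u ⬝ᵥ u) + κ ^ 2 * (w ⬝ᵥ w)) / (2 * κ) := by field_simp
  rw [hrhs, le_div_iff₀ (by positivity)]
  linarith

/-- Young-type cross-term bound: for A with ρ(AᵀA) ≤ 1, D diagonal 0/1,
u ∈ ℝᵐ, v ∈ ℝⁿ, and κ > 0: uᵀ A D AᵀA D v ≤ (1/(2κ)) uᵀu + (κ/2) vᵀDv. -/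
theorem young_cross_term_bound (n m : ℕ) (A : Matrix (Fin m) (Fin n) ℝ)
    (hρ : spectralRadius ℝ (Aᵀ * A) ≤ 1)
    (d : Fin n → ℝ) (hd : ∀ i, d i = 0 ∨ d i = 1)
    (D : Matrix (Fin n) (Fin n) ℝ) (hD : D = Matrix.diagonal d) :
    ∀ (u : Fin m → ℝ) (v : Fin n → ℝ) (κ : ℝ), 0 < κ →
      u ⬝ᵥ ((A * D * Aᵀ * A * D) *ᵥ v)
        ≤ (1 / (2 * κ)) * (u ⬝ᵥ u) + (κ / 2) * (v ⬝ᵥ (D *ᵥ v)) := by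
  subst hD
  intro u v κ hκ
  classical
  set S := Aᵀ * A with hSdef
  have hA' : Aᵀ = Aᴴ := (Matrix.conjTranspose_eq_transpose_of_trivial A).symm
  have hPSD : S.PosSemidef := by
    rw [hSdef, hA']; exact Matrix.posSemidef_conjTranspose_mul_self A
  have hS : S.IsHermitian := hPSD.1
  set U : Matrix (Fin n) (Fin n) ℝ := (hS.eigenvectorUnitary : Matrix (Fin n) (Fin n) ℝ) with hU
  set lam : Fin n → ℝ := hS.eigenvalues with hlam
  have hstar : star U = Uᴴ := rfl
  have hUU : U * Uᴴ = 1 := by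
    have := (Matrix.mem_unitaryGroup_iff).mp hS.eigenvectorUnitary.2
    rwa [hstar] at this
  have hUU' : Uᴴ * U = 1 := by
    have := (Matrix.mem_unitaryGroup_iff').mp hS.eigenvectorUnitary.2
    rwa [hstar] at this
  have hspec : S = U * Matrix.diagonal lam * Uᴴ := by
    have h := hS.spectral_theorem
    have hco : (RCLike.ofReal ∘ hS.eigenvalues : Fin n → ℝ) = lam := funext fun i => rfl
    rw [hco, Unitary.conjStarAlgAut_apply] at h; exact h
  -- eigenvalue bounds
  have hlam0 : ∀ i, 0 ≤ lam i := fun i => hPSD.eigenvalues_nonneg i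
  have hlam1 : ∀ i, lam i ≤ 1 := by
    intro i
    have hmem := hS.eigenvalues_mem_spectrum_real i
    have hle : (‖lam i‖₊ : ENNReal) ≤ spectralRadius ℝ S := by
      exact le_iSup₂ (α := ENNReal) (f := fun k (_ : k ∈ spectrum ℝ S) => (‖k‖₊ : ENNReal)) (lam i) hmem
    have h1 : (‖lam i‖₊ : ENNReal) ≤ 1 := hle.trans hρ
    have h2 : ‖lam i‖₊ ≤ 1 := by exact_mod_cast h1
    have h3 : |lam i| ≤ 1 := by
      have := (NNReal.coe_le_coe.mpr h2)
      simpa [Real.norm_eq_abs] using this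
    exact (abs_le.mp h3).2
  -- conjugated diagonal matrices are PSD
  have conj : ∀ c : Fin n → ℝ, (∀ i, 0 ≤ c i) →
      (U * Matrix.diagonal c * Uᴴ).PosSemidef := by
    intro c hc
    exact (Matrix.PosSemidef.diagonal hc).mul_mul_conjTranspose_same U
  have e1 : (1 : Matrix (Fin n) (Fin n) ℝ) - S
      = U * Matrix.diagonal (fun i => 1 - lam i) * Uᴴ := by
    have : Matrix.diagonal (fun i => 1 - lam i)
        = (1 : Matrix (Fin n) (Fin n) ℝ) - Matrix.diagonal lam := by
      rw [← Matrix.diagonal_one, ← Matrix.diagonal_sub]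
    rw [this, Matrix.mul_sub, Matrix.sub_mul, mul_one, hUU, ← hspec]
  have e2 : (1 : Matrix (Fin n) (Fin n) ℝ) - S * S
      = U * Matrix.diagonal (fun i => 1 - lam i * lam i) * Uᴴ := by
    have hSS : S * S = U * Matrix.diagonal (fun i => lam i * lam i) * Uᴴ := by
      rw [hspec]
      calc U * Matrix.diagonal lam * Uᴴ * (U * Matrix.diagonal lam * Uᴴ)
          = U * Matrix.diagonal lam * (Uᴴ * U) * Matrix.diagonal lam * Uᴴ := by
            simp only [Matrix.mul_assoc]
        _ = U * (Matrix.diagonal lam * Matrix.diagonal lam) * Uᴴ := by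
            rw [hUU']; simp only [Matrix.mul_assoc, Matrix.mul_one, Matrix.one_mul]
        _ = U * Matrix.diagonal (fun i => lam i * lam i) * Uᴴ := by
            rw [Matrix.diagonal_mul_diagonal]
    have : Matrix.diagonal (fun i => 1 - lam i * lam i)
        = (1 : Matrix (Fin n) (Fin n) ℝ) - Matrix.diagonal (fun i => lam i * lam i) := by
      rw [← Matrix.diagonal_one, ← Matrix.diagonal_sub]
    rw [this, Matrix.mul_sub, Matrix.sub_mul, mul_one, hUU, ← hSS]
  have q1 : ∀ x : Fin n → ℝ, x ⬝ᵥ (S *ᵥ x) ≤ x ⬝ᵥ x := by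
    intro x
    have hpsd : ((1 : Matrix (Fin n) (Fin n) ℝ) - S).PosSemidef := by
      rw [e1]; exact conj _ (fun i => by linarith [hlam1 i])
    have h := hpsd.dotProduct_mulVec_nonneg x
    simp only [Matrix.sub_mulVec, Matrix.one_mulVec, dotProduct_sub, star_trivial] at h
    linarith
  have q2 : ∀ x : Fin n → ℝ, x ⬝ᵥ ((S * S) *ᵥ x) ≤ x ⬝ᵥ x := by
    intro x
    have hpsd : ((1 : Matrix (Fin n) (Fin n) ℝ) - S * S).PosSemidef := by
      rw [e2]; exact conj _ (fun i => by nlinarith [hlam0 i, hlam1 i])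
    have h := hpsd.dotProduct_mulVec_nonneg x
    simp only [Matrix.sub_mulVec, Matrix.one_mulVec, dotProduct_sub, star_trivial] at h
    linarith
  -- dot product rewrites
  have hAdot : ∀ x : Fin n → ℝ, (A *ᵥ x) ⬝ᵥ (A *ᵥ x) = x ⬝ᵥ (S *ᵥ x) := by
    intro x
    rw [hSdef, ← Matrix.mulVec_mulVec, Matrix.mulVec_transpose, Matrix.dotProduct_mulVec,
      dotProduct_comm]
  have hSsym : Sᵀ = S := by
    rw [← Matrix.conjTranspose_eq_transpose_of_trivial]; exact hS
  have hmv : ∀ (M : Matrix (Fin n) (Fin n) ℝ) (x y : Fin n → ℝ),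
      (M *ᵥ x) ⬝ᵥ y = x ⬝ᵥ (Mᵀ *ᵥ y) := by
    intro M x y
    rw [dotProduct_comm, Matrix.dotProduct_mulVec, dotProduct_comm, Matrix.mulVec_transpose]
  have hSdot : ∀ x : Fin n → ℝ, (S *ᵥ x) ⬝ᵥ (S *ᵥ x) = x ⬝ᵥ ((S * S) *ᵥ x) := by
    intro x
    rw [hmv, hSsym, Matrix.mulVec_mulVec]
  -- D facts
  have hDmv : ∀ (x : Fin n → ℝ) i, (Matrix.diagonal d *ᵥ x) i = d i * x i := by
    intro x i; rw [Matrix.mulVec_diagonal]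
  have hDcontract : ∀ x : Fin n → ℝ,
      (Matrix.diagonal d *ᵥ x) ⬝ᵥ (Matrix.diagonal d *ᵥ x) ≤ x ⬝ᵥ x := by
    intro x
    simp only [dotProduct, hDmv]
    apply Finset.sum_le_sum
    intro i _
    rcases hd i with h | h <;> simp [h] <;> nlinarith [mul_self_nonneg (x i)]
  have hDquad : (Matrix.diagonal d *ᵥ v) ⬝ᵥ (Matrix.diagonal d *ᵥ v)
      = v ⬝ᵥ (Matrix.diagonal d *ᵥ v) := by
    simp only [dotProduct, hDmv]
    apply Finset.sum_congr rfl
    intro i _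
    rcases hd i with h | h <;> simp [h] <;> ring
  -- put it together
  set y : Fin n → ℝ := Matrix.diagonal d *ᵥ v with hy
  set z : Fin n → ℝ := S *ᵥ y with hz
  set p : Fin n → ℝ := Matrix.diagonal d *ᵥ z with hp
  have hw : (A * Matrix.diagonal d * Aᵀ * A * Matrix.diagonal d) *ᵥ v = A *ᵥ p := by
    rw [hp, hz, hy, hSdef]
    simp only [← Matrix.mulVec_mulVec]
  have hbound : (A *ᵥ p) ⬝ᵥ (A *ᵥ p) ≤ v ⬝ᵥ (Matrix.diagonal d *ᵥ v) := by
    calc (A *ᵥ p) ⬝ᵥ (A *ᵥ p) = p ⬝ᵥ (S *ᵥ p) := hAdot p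
      _ ≤ p ⬝ᵥ p := q1 p
      _ ≤ z ⬝ᵥ z := hDcontract z
      _ = y ⬝ᵥ ((S * S) *ᵥ y) := hSdot y
      _ ≤ y ⬝ᵥ y := q2 y
      _ = v ⬝ᵥ (Matrix.diagonal d *ᵥ v) := hDquad
  calc u ⬝ᵥ ((A * Matrix.diagonal d * Aᵀ * A * Matrix.diagonal d) *ᵥ v)
      = u ⬝ᵥ (A *ᵥ p) := by rw [hw]
    _ ≤ (1 / (2 * κ)) * (u ⬝ᵥ u) + (κ / 2) * ((A *ᵥ p) ⬝ᵥ (A *ᵥ p)) := young_dot u _ κ hκ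
    _ ≤ (1 / (2 * κ)) * (u ⬝ᵥ u) + (κ / 2) * (v ⬝ᵥ (Matrix.diagonal d *ᵥ v)) := by
        have := mul_le_mul_of_nonneg_left hbound (le_of_lt (by positivity : (0:ℝ) < κ / 2))
        linarith
end

section
/- Assume ρ(AᵀA) ≤ 1. Let x̂ ∈ ℝⁿ with x̂ ≥ 0 and ẑ ∈ ℝᵐ, set p̂ = σ(x̂,ẑ), and suppose i ∈ {1,…,n} satisfies i ∉ p̂ (i.e., x̂_i = 0 and f_i(x̂,ẑ) < 0). Define the trajectory x(t) = x̂ + t·I_{p̂} f(x̂,ẑ) and z(t) = ẑ + t·(Ax̂ − b) for t ≥ 0, and let T > 0 satisfy f_i(x(T),z(T)) = 0. Then for every ν > 0 and every t ≥ T with t − T < ν/(2√2): f_i(x(t),z(t))² ≤ ν²·( f(x̂,ẑ)ᵀ I_{p̂ ∩ N_i^x} f(x̂,ẑ) + (Ax̂ − b)ᵀ I_{N_i^z} (Ax̂ − b) ). -/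
open Matrix BigOperators

/-- x-neighbor set of agent i: N_i^x = {j : (AᵀA)_{ij} ≠ 0} ∪ {i}. -/
def Nx {n m : ℕ} (A : Matrix (Fin m) (Fin n) ℝ) (i : Fin n) : Set (Fin n) :=
  {j | (Aᵀ * A) i j ≠ 0} ∪ {i}

/-- z-neighbor set of agent i: N_i^z = {ℓ : a_{ℓ,i} ≠ 0}. -/
def Nz {n m : ℕ} (A : Matrix (Fin m) (Fin n) ℝ) (i : Fin n) : Set (Fin m) :=
  {ℓ | A ℓ i ≠ 0}

lemma unitary_dot {k : ℕ} (U : Matrix (Fin k) (Fin k) ℝ) (hU : star U * U = 1)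
    (a b : Fin k → ℝ) : (U *ᵥ a) ⬝ᵥ (U *ᵥ b) = a ⬝ᵥ b := by
  rw [Matrix.dotProduct_mulVec, ← Matrix.mulVec_transpose, Matrix.mulVec_mulVec]
  have h : Uᵀ * U = 1 := by
    rwa [Matrix.star_eq_conjTranspose, Matrix.conjTranspose_eq_transpose_of_trivial] at hU
  rw [h, Matrix.one_mulVec]

lemma quad_bound {k : ℕ} (M : Matrix (Fin k) (Fin k) ℝ) (hM : M.IsHermitian)
    (h1 : ∀ j, |hM.eigenvalues j| ≤ 1) (v : Fin k → ℝ) :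
    v ⬝ᵥ (M *ᵥ v) ≤ v ⬝ᵥ v ∧ v ⬝ᵥ ((M * M) *ᵥ v) ≤ v ⬝ᵥ v := by
  set U : Matrix (Fin k) (Fin k) ℝ := (hM.eigenvectorUnitary : Matrix (Fin k) (Fin k) ℝ) with hUdef
  have hU1 : star U * U = 1 := Matrix.mem_unitaryGroup_iff'.mp hM.eigenvectorUnitary.2
  have hU2 : U * star U = 1 := Matrix.mem_unitaryGroup_iff.mp hM.eigenvectorUnitary.2
  set w : Fin k → ℝ := star U *ᵥ v with hw
  have hv : U *ᵥ w = v := by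
    rw [hw, Matrix.mulVec_mulVec, hU2, Matrix.one_mulVec]
  set lam := hM.eigenvalues with hlam
  have hdot : ∀ a b : Fin k → ℝ, (U *ᵥ a) ⬝ᵥ (U *ᵥ b) = a ⬝ᵥ b := unitary_dot U hU1
  have hgen : ∀ a : Fin k → ℝ, M *ᵥ (U *ᵥ a) = U *ᵥ fun j => lam j * a j := by
    intro a
    conv_lhs => rw [hM.spectral_theorem]
    rw [Unitary.conjStarAlgAut_apply, ← hUdef, Matrix.mulVec_mulVec, mul_assoc (U * _), hU1, mul_one]
    have hd : (RCLike.ofReal ∘ hM.eigenvalues : Fin k → ℝ) = lam := by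
      funext j; simp [RCLike.ofReal_real_eq_id, hlam]
    rw [hd, ← Matrix.mulVec_mulVec]
    have hda : Matrix.diagonal lam *ᵥ a = fun j => lam j * a j := by
      funext j; rw [Matrix.mulVec_diagonal]
    rw [hda]
  have hMv : M *ᵥ v = U *ᵥ fun j => lam j * w j := by rw [← hv, hgen]
  have hM2v : (M * M) *ᵥ v = U *ᵥ fun j => lam j * (lam j * w j) := by
    rw [← Matrix.mulVec_mulVec, hMv, hgen]
  have hvv : v ⬝ᵥ v = ∑ j, w j ^ 2 := by
    rw [← hv, hdot]; simp [dotProduct, sq]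
  constructor
  · calc v ⬝ᵥ (M *ᵥ v) = (U *ᵥ w) ⬝ᵥ (U *ᵥ fun j => lam j * w j) := by rw [hMv, hv]
      _ = w ⬝ᵥ fun j => lam j * w j := hdot _ _
      _ ≤ v ⬝ᵥ v := by
          rw [hvv]; simp only [dotProduct]
          refine Finset.sum_le_sum fun j _ => ?_
          nlinarith [sq_nonneg (w j), abs_le.mp (h1 j)]
  · calc v ⬝ᵥ ((M * M) *ᵥ v) = (U *ᵥ w) ⬝ᵥ (U *ᵥ fun j => lam j * (lam j * w j)) := by
          rw [hM2v, hv]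
      _ = w ⬝ᵥ fun j => lam j * (lam j * w j) := hdot _ _
      _ ≤ v ⬝ᵥ v := by
          rw [hvv]; simp only [dotProduct]
          refine Finset.sum_le_sum fun j _ => ?_
          obtain ⟨ha, hb⟩ := abs_le.mp (h1 j)
          nlinarith [mul_nonneg (mul_nonneg (by linarith : (0:ℝ) ≤ 1 - lam j)
            (by linarith : (0:ℝ) ≤ 1 + lam j)) (sq_nonneg (w j))]

/-- Bound on the growth of f_i along the sample-and-hold flow under a mode
mismatch.  With p̂ = σ(x̂,ẑ), i ∉ p̂, x(t) = x̂ + t·I_{p̂}f(x̂,ẑ), z(t) = ẑ + t·(Ax̂−b),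
and T > 0 with f_i(x(T),z(T)) = 0, for every ν > 0 and t ≥ T with t − T < ν/(2√2):
f_i(x(t),z(t))² ≤ ν²( f̂ᵀI_{p̂∩N_i^x}f̂ + (Ax̂−b)ᵀI_{N_i^z}(Ax̂−b) ). -/
theorem mode_mismatch_bound (n m : ℕ) (c : Fin n → ℝ) (b : Fin m → ℝ)
    (A : Matrix (Fin m) (Fin n) ℝ)
    (hρ : spectralRadius ℝ (Aᵀ * A) ≤ 1)
    (xh : Fin n → ℝ) (zh : Fin m → ℝ)
    (hxh : ∀ i, 0 ≤ xh i)
    (i : Fin n) (hi : i ∉ sgm A b c xh zh)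
    (T : ℝ) (hT : 0 < T)
    (hfT : fmap A b c
        (xh + T • (ISet (sgm A b c xh zh) *ᵥ fmap A b c xh zh))
        (zh + T • (A *ᵥ xh - b)) i = 0) :
    ∀ ν : ℝ, 0 < ν → ∀ t : ℝ, T ≤ t → t - T < ν / (2 * Real.sqrt 2) →
      (fmap A b c
          (xh + t • (ISet (sgm A b c xh zh) *ᵥ fmap A b c xh zh))
          (zh + t • (A *ᵥ xh - b)) i) ^ 2
        ≤ ν ^ 2 *
          (fmap A b c xh zh ⬝ᵥ (ISet (sgm A b c xh zh ∩ Nx A i) *ᵥ fmap A b c xh zh)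
            + (A *ᵥ xh - b) ⬝ᵥ (ISet (Nz A i) *ᵥ (A *ᵥ xh - b))) := by
  classical
  intro ν hν t hTt htν
  set p := sgm A b c xh zh with hp
  set f := fmap A b c xh zh with hf
  set u : Fin n → ℝ := ISet p *ᵥ f with hu
  set w : Fin m → ℝ := A *ᵥ xh - b with hwdef
  set M : Matrix (Fin n) (Fin n) ℝ := Aᵀ * A with hMdef
  -- Hermitian and eigenvalue bounds
  have hAH : Aᴴ = Aᵀ := Matrix.conjTranspose_eq_transpose_of_trivial A
  have hM : M.IsHermitian := by
    rw [hMdef, ← hAH]; exact Matrix.isHermitian_conjTranspose_mul_self A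
  have heig : ∀ j, |hM.eigenvalues j| ≤ 1 := by
    intro j
    have hmem : hM.eigenvalues j ∈ spectrum ℝ M := hM.eigenvalues_mem_spectrum_real j
    have h2 : (‖hM.eigenvalues j‖₊ : ENNReal) ≤ spectralRadius ℝ M :=
      le_iSup₂ (f := fun k (_ : k ∈ spectrum ℝ M) => (‖k‖₊ : ENNReal)) _ hmem
    have h3 : (‖hM.eigenvalues j‖₊ : ENNReal) ≤ 1 := le_trans h2 hρ
    have h4 : ‖hM.eigenvalues j‖₊ ≤ 1 := by exact_mod_cast h3
    have h5 : ‖hM.eigenvalues j‖ ≤ 1 := h4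
    rwa [Real.norm_eq_abs] at h5
  -- basic quantities
  have hui : u i = 0 := by
    have : i ∉ p := hi
    simp [hu, ISet, Matrix.mulVec_diagonal, this]
  -- the affine formula for fmap along the flow
  have hflow : ∀ s : ℝ, fmap A b c (xh + s • u) (zh + s • w) i
      = f i - s * ((Aᵀ *ᵥ w) i + (M *ᵥ u) i) := by
    intro s
    have h1 : A *ᵥ (xh + s • u) - b = w + s • (A *ᵥ u) := by
      rw [Matrix.mulVec_add, Matrix.mulVec_smul, hwdef]; abel
    have h2 : Aᵀ *ᵥ (w + s • (A *ᵥ u)) = Aᵀ *ᵥ w + s • (M *ᵥ u) := by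
      rw [Matrix.mulVec_add, Matrix.mulVec_smul, Matrix.mulVec_mulVec, hMdef]
    have h3 : Aᵀ *ᵥ (zh + s • w) = Aᵀ *ᵥ zh + s • (Aᵀ *ᵥ w) := by
      rw [Matrix.mulVec_add, Matrix.mulVec_smul]
    have h4 : f i = -((Aᵀ *ᵥ zh) i + c i + xh i) - (Aᵀ *ᵥ w) i := by
      rw [hf]; simp only [fmap, Pi.sub_apply, Pi.neg_apply, Pi.add_apply, hwdef]
    simp only [fmap, h1, h2, h3, Pi.add_apply, Pi.sub_apply, Pi.neg_apply, Pi.smul_apply,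
      smul_eq_mul, h4]
    rw [hui]
    ring
  set d : ℝ := (Aᵀ *ᵥ w) i + (M *ᵥ u) i with hd
  have hfi : f i = T * d := by
    have := hflow T
    rw [hfT] at this
    linarith
  have hgt : fmap A b c (xh + t • u) (zh + t • w) i = (T - t) * d := by
    rw [hflow t, hfi]; ring
  -- S1 and S2
  set S1 : ℝ := f ⬝ᵥ (ISet (p ∩ Nx A i) *ᵥ f) with hS1
  set S2 : ℝ := w ⬝ᵥ (ISet (Nz A i) *ᵥ w) with hS2
  have hS1e : S1 = ∑ j, (if j ∈ p ∩ Nx A i then (1:ℝ) else 0) * f j ^ 2 := by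
    rw [hS1]; simp [dotProduct, ISet, Matrix.mulVec_diagonal]
    refine Finset.sum_congr rfl fun j _ => ?_
    split <;> ring
  have hS2e : S2 = ∑ ℓ, (if ℓ ∈ Nz A i then (1:ℝ) else 0) * w ℓ ^ 2 := by
    rw [hS2]; simp [dotProduct, ISet, Matrix.mulVec_diagonal]
    refine Finset.sum_congr rfl fun ℓ _ => ?_
    split <;> ring
  have hS1nn : 0 ≤ S1 := by
    rw [hS1e]; refine Finset.sum_nonneg fun j _ => ?_
    split <;> simp [sq_nonneg]
  have hS2nn : 0 ≤ S2 := by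
    rw [hS2e]; refine Finset.sum_nonneg fun ℓ _ => ?_
    split <;> simp [sq_nonneg]
  -- diagonal entries bounds via quad_bound
  have hqb := quad_bound M hM heig (Pi.single i 1)
  have hsingle : ∀ N : Matrix (Fin n) (Fin n) ℝ,
      (Pi.single i 1 : Fin n → ℝ) ⬝ᵥ (N *ᵥ (Pi.single i 1)) = N i i := by
    intro N
    simp [dotProduct, Matrix.mulVec_single, Pi.single_apply]
  have hone : (Pi.single i 1 : Fin n → ℝ) ⬝ᵥ (Pi.single i 1) = 1 := by
    simp [dotProduct, Pi.single_apply]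
  have hMii : M i i ≤ 1 := by
    have h := hqb.1
    rwa [hsingle M, hone] at h
  have hM2ii : (M * M) i i ≤ 1 := by
    have h := hqb.2
    rwa [hsingle (M * M), hone] at h
  -- Cauchy-Schwarz bound 1 : ((Aᵀ w) i)^2 ≤ S2
  have hb1 : ((Aᵀ *ᵥ w) i) ^ 2 ≤ S2 := by
    have he : (Aᵀ *ᵥ w) i = ∑ ℓ, A ℓ i * ((if ℓ ∈ Nz A i then (1:ℝ) else 0) * w ℓ) := by
      simp only [Matrix.mulVec, dotProduct, Matrix.transpose_apply]
      refine Finset.sum_congr rfl fun ℓ _ => ?_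
      by_cases hℓ : ℓ ∈ Nz A i
      · simp [hℓ]
      · have : A ℓ i = 0 := by simpa [Nz] using hℓ
        simp [this]
    have hcs := Finset.sum_mul_sq_le_sq_mul_sq Finset.univ
      (fun ℓ => A ℓ i) (fun ℓ => (if ℓ ∈ Nz A i then (1:ℝ) else 0) * w ℓ)
    have hrow : ∑ ℓ, (A ℓ i) ^ 2 = M i i := by
      rw [hMdef]; simp [Matrix.mul_apply, sq]
    have hsq : ∑ ℓ, ((if ℓ ∈ Nz A i then (1:ℝ) else 0) * w ℓ) ^ 2 = S2 := by
      rw [hS2e]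
      refine Finset.sum_congr rfl fun ℓ _ => ?_
      split <;> ring
    rw [he]
    calc (∑ ℓ, A ℓ i * ((if ℓ ∈ Nz A i then (1:ℝ) else 0) * w ℓ)) ^ 2
        ≤ (∑ ℓ, (A ℓ i) ^ 2) * ∑ ℓ, ((if ℓ ∈ Nz A i then (1:ℝ) else 0) * w ℓ) ^ 2 := hcs
      _ = M i i * S2 := by rw [hrow, hsq]
      _ ≤ 1 * S2 := by exact mul_le_mul_of_nonneg_right hMii hS2nn
      _ = S2 := one_mul _
  -- Cauchy-Schwarz bound 2 : ((M u) i)^2 ≤ S1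
  have hb2 : ((M *ᵥ u) i) ^ 2 ≤ S1 := by
    have he : (M *ᵥ u) i = ∑ j, M i j * ((if j ∈ p ∩ Nx A i then (1:ℝ) else 0) * f j) := by
      simp only [Matrix.mulVec, dotProduct, hu, ISet, Matrix.mulVec_diagonal]
      refine Finset.sum_congr rfl fun j _ => ?_
      by_cases hjp : j ∈ p
      · by_cases hjn : j ∈ Nx A i
        · simp [hjp, hjn, Set.mem_inter_iff]
        · have hMij : M i j = 0 := by
            by_contra hne
            exact hjn (Or.inl hne)
          simp [hMij]
      · simp [hjp, Set.mem_inter_iff]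
    have hcs := Finset.sum_mul_sq_le_sq_mul_sq Finset.univ
      (fun j => M i j) (fun j => (if j ∈ p ∩ Nx A i then (1:ℝ) else 0) * f j)
    have hrow : ∑ j, (M i j) ^ 2 = (M * M) i i := by
      simp only [Matrix.mul_apply, sq]
      refine Finset.sum_congr rfl fun j _ => ?_
      have hsymm : M j i = M i j := by
        have := hM.apply i j
        simpa [Matrix.conjTranspose_apply] using this
      rw [hsymm]
    have hsq : ∑ j, ((if j ∈ p ∩ Nx A i then (1:ℝ) else 0) * f j) ^ 2 = S1 := by
      rw [hS1e]
      refine Finset.sum_congr rfl fun j _ => ?_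
      split <;> ring
    rw [he]
    calc (∑ j, M i j * ((if j ∈ p ∩ Nx A i then (1:ℝ) else 0) * f j)) ^ 2
        ≤ (∑ j, (M i j) ^ 2) * ∑ j, ((if j ∈ p ∩ Nx A i then (1:ℝ) else 0) * f j) ^ 2 := hcs
      _ = (M * M) i i * S1 := by rw [hrow, hsq]
      _ ≤ 1 * S1 := by exact mul_le_mul_of_nonneg_right hM2ii hS1nn
      _ = S1 := one_mul _
  -- final arithmetic
  have hd2 : d ^ 2 ≤ 2 * (S1 + S2) := by
    rw [hd]; nlinarith [hb1, hb2, sq_nonneg ((Aᵀ *ᵥ w) i - (M *ᵥ u) i)]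
  have hsq2 : (2 * Real.sqrt 2) ^ 2 = 8 := by
    rw [mul_pow, Real.sq_sqrt (by norm_num : (0:ℝ) ≤ 2)]; norm_num
  have htT : 0 ≤ t - T := by linarith
  have h8 : (t - T) ^ 2 ≤ ν ^ 2 / 8 := by
    have hpos : 0 < 2 * Real.sqrt 2 := by positivity
    have h1 : (t - T) ^ 2 ≤ (ν / (2 * Real.sqrt 2)) ^ 2 := by
      apply pow_le_pow_left₀ htT (le_of_lt htν)
    calc (t - T) ^ 2 ≤ (ν / (2 * Real.sqrt 2)) ^ 2 := h1
      _ = ν ^ 2 / 8 := by rw [div_pow, hsq2]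
  rw [hgt]
  calc ((T - t) * d) ^ 2 = (t - T) ^ 2 * d ^ 2 := by ring
    _ ≤ (ν ^ 2 / 8) * (2 * (S1 + S2)) := by
        apply mul_le_mul h8 hd2 (sq_nonneg d) (by positivity)
    _ ≤ ν ^ 2 * (S1 + S2) := by nlinarith [sq_nonneg ν]
end

section
/- Let S ⊆ {1,…,n}, let x, x̂ ∈ ℝⁿ, z, ẑ ∈ ℝᵐ, and set p̂ = σ(x̂,ẑ). Suppose that for each i ∈ S, f_i(x,z)² ≤ (1/(120·|N_i|·max_{j ∈ N_i}|N_j|))·( f(x̂,ẑ)ᵀ I_{p̂ ∩ N_i^x} f(x̂,ẑ) + (Ax̂ − b)ᵀ I_{N_i^z} (Ax̂ − b) ). Then f(x,z)ᵀ I_S f(x,z) = Σ_{i∈S} f_i(x,z)² ≤ (1/120)·( f(x̂,ẑ)ᵀ I_{p̂} f(x̂,ẑ) + (Ax̂ − b)ᵀ(Ax̂ − b) ). -/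
open Matrix BigOperators

-- Full neighbor set of an agent (`Sum.inl i` is real agent i, `Sum.inr ℓ` is virtual
-- agent n+ℓ): N_i = N_i^x ∪ {n+ℓ : ℓ ∈ N_i^z} and N_{n+ℓ} = {j : a_{ℓ,j} ≠ 0} ∪ {n+ℓ}.
open Classical in
noncomputable def Nbhd {n m : ℕ} (A : Matrix (Fin m) (Fin n) ℝ) :
    Fin n ⊕ Fin m → Finset (Fin n ⊕ Fin m)
  | Sum.inl i =>
      ((Finset.univ.filter fun j : Fin n => (Aᵀ * A) i j ≠ 0).image Sum.inl
        ∪ {Sum.inl i})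
      ∪ (Finset.univ.filter fun ℓ : Fin m => A ℓ i ≠ 0).image Sum.inr
  | Sum.inr ℓ =>
      (Finset.univ.filter fun j : Fin n => A ℓ j ≠ 0).image Sum.inl ∪ {Sum.inr ℓ}

-- helpers
lemma dot_ISet {ι : Type*} [Fintype ι] [DecidableEq ι] (T : Set ι) (v : ι → ℝ) :
    v ⬝ᵥ (ISet T *ᵥ v) = ∑ j, T.indicator (fun j => v j ^ 2) j := by
  simp only [dotProduct, ISet, Matrix.mulVec_diagonal]
  refine Finset.sum_congr rfl fun j _ => ?_
  by_cases h : j ∈ T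
  · rw [Set.indicator_of_mem h, if_pos h]; ring
  · rw [Set.indicator_of_notMem h, if_neg h]; ring

lemma self_mem_Nbhd {n m : ℕ} (A : Matrix (Fin m) (Fin n) ℝ) (i : Fin n) :
    Sum.inl i ∈ Nbhd A (Sum.inl i) := by
  simp [Nbhd]

lemma AtA_symm {n m : ℕ} (A : Matrix (Fin m) (Fin n) ℝ) (i j : Fin n) :
    (Aᵀ * A) i j = (Aᵀ * A) j i := by
  have h : (Aᵀ * A)ᵀ = Aᵀ * A := by
    rw [Matrix.transpose_mul, Matrix.transpose_transpose]
  conv_lhs => rw [← h]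
  rfl

lemma mem_Nbhd_of_Nx₁ {n m : ℕ} (A : Matrix (Fin m) (Fin n) ℝ) {i j : Fin n}
    (h : j ∈ Nx A i) : Sum.inl j ∈ Nbhd A (Sum.inl i) := by
  simp only [Nx, Set.mem_union, Set.mem_setOf_eq, Set.mem_singleton_iff] at h
  rcases h with h | rfl
  · simp [Nbhd, h]
  · exact self_mem_Nbhd A j

lemma mem_Nbhd_of_Nx₂ {n m : ℕ} (A : Matrix (Fin m) (Fin n) ℝ) {i j : Fin n}
    (h : j ∈ Nx A i) : Sum.inl i ∈ Nbhd A (Sum.inl j) := by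
  simp only [Nx, Set.mem_union, Set.mem_setOf_eq, Set.mem_singleton_iff] at h
  rcases h with h | rfl
  · rw [AtA_symm] at h
    simp [Nbhd, h]
  · exact self_mem_Nbhd A j

lemma mem_Nbhd_of_Nz₁ {n m : ℕ} (A : Matrix (Fin m) (Fin n) ℝ) {i : Fin n} {ℓ : Fin m}
    (h : ℓ ∈ Nz A i) : Sum.inl i ∈ Nbhd A (Sum.inr ℓ) := by
  simp only [Nz, Set.mem_setOf_eq] at h
  simp [Nbhd, h]

lemma mem_Nbhd_of_Nz₂ {n m : ℕ} (A : Matrix (Fin m) (Fin n) ℝ) {i : Fin n} {ℓ : Fin m}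
    (h : ℓ ∈ Nz A i) : Sum.inr ℓ ∈ Nbhd A (Sum.inl i) := by
  simp only [Nz, Set.mem_setOf_eq] at h
  simp [Nbhd, h]

lemma key_count {n m : ℕ} (A : Matrix (Fin m) (Fin n) ℝ) (T : Finset (Fin n))
    (v : Fin n ⊕ Fin m)
    (h1 : ∀ i ∈ T, Sum.inl i ∈ Nbhd A v)
    (h2 : ∀ i ∈ T, v ∈ Nbhd A (Sum.inl i)) :
    ∑ i ∈ T, (1 : ℝ) / (((Nbhd A (Sum.inl i)).card : ℝ) *
      (((Nbhd A (Sum.inl i)).sup fun j => (Nbhd A j).card : ℕ) : ℝ)) ≤ 1 := by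
  rcases T.eq_empty_or_nonempty with rfl | ⟨i0, hi0⟩
  · simp
  set t := Nbhd A v with ht
  have htpos : 0 < t.card := Finset.card_pos.mpr ⟨_, h1 i0 hi0⟩
  have hTcard : T.card ≤ t.card := by
    have hsub : T.image Sum.inl ⊆ t := by
      intro a ha
      rcases Finset.mem_image.mp ha with ⟨i, hi, rfl⟩
      exact h1 i hi
    calc T.card = (T.image Sum.inl).card :=
          (Finset.card_image_of_injective T Sum.inl_injective).symm
      _ ≤ t.card := Finset.card_le_card hsub
  have hterm : ∀ i ∈ T, (1 : ℝ) / (((Nbhd A (Sum.inl i)).card : ℝ) *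
      (((Nbhd A (Sum.inl i)).sup fun j => (Nbhd A j).card : ℕ) : ℝ)) ≤ 1 / t.card := by
    intro i hi
    have hc1 : (1 : ℕ) ≤ (Nbhd A (Sum.inl i)).card :=
      Finset.card_pos.mpr ⟨_, self_mem_Nbhd A i⟩
    have hs : t.card ≤ (Nbhd A (Sum.inl i)).sup fun j => (Nbhd A j).card := by
      have := Finset.le_sup (f := fun j => (Nbhd A j).card) (h2 i hi)
      simpa [ht] using this
    have hge : (t.card : ℝ) ≤ ((Nbhd A (Sum.inl i)).card : ℝ) *
        (((Nbhd A (Sum.inl i)).sup fun j => (Nbhd A j).card : ℕ) : ℝ) := by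
      have : t.card ≤ (Nbhd A (Sum.inl i)).card *
          ((Nbhd A (Sum.inl i)).sup fun j => (Nbhd A j).card) :=
        le_trans hs (Nat.le_mul_of_pos_left _ hc1)
      exact_mod_cast this
    exact one_div_le_one_div_of_le (by exact_mod_cast htpos) hge
  calc ∑ i ∈ T, (1 : ℝ) / (((Nbhd A (Sum.inl i)).card : ℝ) *
        (((Nbhd A (Sum.inl i)).sup fun j => (Nbhd A j).card : ℕ) : ℝ))
      ≤ ∑ _i ∈ T, (1 : ℝ) / t.card := Finset.sum_le_sum hterm
    _ = T.card / t.card := by rw [Finset.sum_const]; ring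
    _ ≤ 1 := by
        rw [div_le_one (by exact_mod_cast htpos)]
        exact_mod_cast hTcard

/-- Column bound: sum of weights over a subfamily of neighbors of `v`, times `q`. -/
lemma col_bound {n m : ℕ} (A : Matrix (Fin m) (Fin n) ℝ) (T : Finset (Fin n))
    (v : Fin n ⊕ Fin m) (q : ℝ) (hq : 0 ≤ q)
    (h1 : ∀ i ∈ T, Sum.inl i ∈ Nbhd A v)
    (h2 : ∀ i ∈ T, v ∈ Nbhd A (Sum.inl i)) :
    ∑ i ∈ T, (1 / (120 * ((Nbhd A (Sum.inl i)).card : ℝ) *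
        (((Nbhd A (Sum.inl i)).sup fun j => (Nbhd A j).card : ℕ) : ℝ))) * q
      ≤ (1 / 120) * q := by
  rw [← Finset.sum_mul]
  refine mul_le_mul_of_nonneg_right ?_ hq
  have heq : ∑ i ∈ T, 1 / (120 * ((Nbhd A (Sum.inl i)).card : ℝ) *
        (((Nbhd A (Sum.inl i)).sup fun j => (Nbhd A j).card : ℕ) : ℝ))
      = (1 / 120) * ∑ i ∈ T, (1 : ℝ) / (((Nbhd A (Sum.inl i)).card : ℝ) *
        (((Nbhd A (Sum.inl i)).sup fun j => (Nbhd A j).card : ℕ) : ℝ)) := by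
    rw [Finset.mul_sum]
    refine Finset.sum_congr rfl fun i _ => ?_
    rw [one_div_mul_one_div, ← mul_assoc]
  rw [heq]
  calc (1 / 120 : ℝ) * ∑ i ∈ T, (1 : ℝ) / (((Nbhd A (Sum.inl i)).card : ℝ) *
        (((Nbhd A (Sum.inl i)).sup fun j => (Nbhd A j).card : ℕ) : ℝ))
      ≤ (1 / 120) * 1 := by
        refine mul_le_mul_of_nonneg_left (key_count A T v h1 h2) (by norm_num)
    _ = 1 / 120 := by ring


/-- Aggregation of the per-agent mode-mismatch bounds: if for each i ∈ S,
f_i(x,z)² ≤ (1/(120|N_i|·max_{j∈N_i}|N_j|))·(f̂ᵀI_{p̂∩N_i^x}f̂ + (Ax̂−b)ᵀI_{N_i^z}(Ax̂−b)),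
then f(x,z)ᵀI_S f(x,z) = Σ_{i∈S} f_i(x,z)² ≤ (1/120)(f̂ᵀI_{p̂}f̂ + (Ax̂−b)ᵀ(Ax̂−b)). -/
theorem aggregated_mismatch_bound (n m : ℕ) (c : Fin n → ℝ) (b : Fin m → ℝ)
    (A : Matrix (Fin m) (Fin n) ℝ)
    (S : Finset (Fin n))
    (x xh : Fin n → ℝ) (z zh : Fin m → ℝ)
    (hyp : ∀ i ∈ S,
      (fmap A b c x z i) ^ 2
        ≤ (1 / (120 * ((Nbhd A (Sum.inl i)).card : ℝ) *
              (((Nbhd A (Sum.inl i)).sup fun j => (Nbhd A j).card : ℕ) : ℝ))) *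
          (fmap A b c xh zh ⬝ᵥ (ISet (sgm A b c xh zh ∩ Nx A i) *ᵥ fmap A b c xh zh)
            + (A *ᵥ xh - b) ⬝ᵥ (ISet (Nz A i) *ᵥ (A *ᵥ xh - b)))) :
    fmap A b c x z ⬝ᵥ (ISet (↑S : Set (Fin n)) *ᵥ fmap A b c x z)
      = ∑ i ∈ S, (fmap A b c x z i) ^ 2 ∧
    fmap A b c x z ⬝ᵥ (ISet (↑S : Set (Fin n)) *ᵥ fmap A b c x z)
      ≤ (1 / 120) *
        (fmap A b c xh zh ⬝ᵥ (ISet (sgm A b c xh zh) *ᵥ fmap A b c xh zh)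
          + (A *ᵥ xh - b) ⬝ᵥ (A *ᵥ xh - b)) := by
  classical
  set f := fmap A b c x z with hf
  set g := fmap A b c xh zh with hg
  set r := A *ᵥ xh - b with hr
  set p := sgm A b c xh zh with hp
  set w : Fin n → ℝ := fun i => 1 / (120 * ((Nbhd A (Sum.inl i)).card : ℝ) *
      (((Nbhd A (Sum.inl i)).sup fun j => (Nbhd A j).card : ℕ) : ℝ)) with hw
  have hsum : f ⬝ᵥ (ISet (↑S : Set (Fin n)) *ᵥ f) = ∑ i ∈ S, f i ^ 2 := by
    rw [dot_ISet]
    have : ∀ j ∈ Finset.univ, (↑S : Set (Fin n)).indicator (fun j => f j ^ 2) j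
        = if j ∈ S then f j ^ 2 else 0 := by
      intro j _
      by_cases h : j ∈ S
      · rw [Set.indicator_of_mem (by exact_mod_cast h), if_pos h]
      · rw [Set.indicator_of_notMem (by exact_mod_cast h), if_neg h]
    rw [Finset.sum_congr rfl this, Finset.sum_ite_mem, Finset.univ_inter]
  refine ⟨hsum, ?_⟩
  rw [hsum, dot_ISet]
  have hrr : r ⬝ᵥ r = ∑ ℓ, r ℓ ^ 2 := by
    simp only [dotProduct]
    exact Finset.sum_congr rfl fun ℓ _ => (sq (r ℓ)).symm
  rw [hrr]
  -- step 1: apply the hypothesis, with dot products expanded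
  have step1 : ∑ i ∈ S, f i ^ 2
      ≤ ∑ i ∈ S, (∑ j, w i * (p ∩ Nx A i).indicator (fun j => g j ^ 2) j
          + ∑ ℓ, w i * (Nz A i).indicator (fun ℓ => r ℓ ^ 2) ℓ) := by
    refine Finset.sum_le_sum fun i hi => ?_
    have h := hyp i hi
    rw [dot_ISet, dot_ISet] at h
    calc f i ^ 2 ≤ w i * ((∑ j, (p ∩ Nx A i).indicator (fun j => g j ^ 2) j)
          + ∑ ℓ, (Nz A i).indicator (fun ℓ => r ℓ ^ 2) ℓ) := h
      _ = ∑ j, w i * (p ∩ Nx A i).indicator (fun j => g j ^ 2) j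
          + ∑ ℓ, w i * (Nz A i).indicator (fun ℓ => r ℓ ^ 2) ℓ := by
          rw [mul_add, Finset.mul_sum, Finset.mul_sum]
  refine le_trans step1 ?_
  rw [Finset.sum_add_distrib, Finset.sum_comm, Finset.sum_comm (s := S)]
  -- column bounds
  have hcol1 : ∀ j : Fin n, ∑ i ∈ S, w i * (p ∩ Nx A i).indicator (fun j => g j ^ 2) j
      ≤ (1 / 120) * p.indicator (fun j => g j ^ 2) j := by
    intro j
    by_cases hjp : j ∈ p
    · rw [Set.indicator_of_mem hjp]
      have hfil : ∑ i ∈ S, w i * (p ∩ Nx A i).indicator (fun j => g j ^ 2) j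
          = ∑ i ∈ S.filter (fun i => j ∈ Nx A i), w i * g j ^ 2 := by
        rw [Finset.sum_filter]
        refine Finset.sum_congr rfl fun i _ => ?_
        by_cases hji : j ∈ Nx A i
        · rw [Set.indicator_of_mem (Set.mem_inter hjp hji), if_pos hji]
        · rw [Set.indicator_of_notMem (fun hmem => hji hmem.2), if_neg hji, mul_zero]
      rw [hfil]
      refine col_bound A _ (Sum.inl j) _ (sq_nonneg _) ?_ ?_
      · intro i hi
        exact mem_Nbhd_of_Nx₂ A (Finset.mem_filter.mp hi).2
      · intro i hi
        exact mem_Nbhd_of_Nx₁ A (Finset.mem_filter.mp hi).2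
    · have hz : ∀ i ∈ S, w i * (p ∩ Nx A i).indicator (fun j => g j ^ 2) j = 0 := by
        intro i _
        rw [Set.indicator_of_notMem (fun hmem => hjp hmem.1), mul_zero]
      rw [Finset.sum_congr rfl hz, Finset.sum_const, smul_zero,
        Set.indicator_of_notMem hjp, mul_zero]
  have hcol2 : ∀ ℓ : Fin m, ∑ i ∈ S, w i * (Nz A i).indicator (fun ℓ => r ℓ ^ 2) ℓ
      ≤ (1 / 120) * r ℓ ^ 2 := by
    intro ℓ
    have hfil : ∑ i ∈ S, w i * (Nz A i).indicator (fun ℓ => r ℓ ^ 2) ℓ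
        = ∑ i ∈ S.filter (fun i => ℓ ∈ Nz A i), w i * r ℓ ^ 2 := by
      rw [Finset.sum_filter]
      refine Finset.sum_congr rfl fun i _ => ?_
      by_cases hli : ℓ ∈ Nz A i
      · rw [Set.indicator_of_mem hli, if_pos hli]
      · rw [Set.indicator_of_notMem hli, if_neg hli, mul_zero]
    rw [hfil]
    refine col_bound A _ (Sum.inr ℓ) _ (sq_nonneg _) ?_ ?_
    · intro i hi
      exact mem_Nbhd_of_Nz₁ A (Finset.mem_filter.mp hi).2
    · intro i hi
      exact mem_Nbhd_of_Nz₂ A (Finset.mem_filter.mp hi).2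
  calc (∑ j, ∑ i ∈ S, w i * (p ∩ Nx A i).indicator (fun j => g j ^ 2) j)
        + ∑ ℓ, ∑ i ∈ S, w i * (Nz A i).indicator (fun ℓ => r ℓ ^ 2) ℓ
      ≤ (∑ j, (1 / 120) * p.indicator (fun j => g j ^ 2) j)
        + ∑ ℓ, (1 / 120) * r ℓ ^ 2 :=
        add_le_add (Finset.sum_le_sum fun j _ => hcol1 j)
          (Finset.sum_le_sum fun ℓ _ => hcol2 ℓ)
    _ = (1 / 120) * ((∑ j, p.indicator (fun j => g j ^ 2) j) + ∑ ℓ, r ℓ ^ 2) := by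
        rw [← Finset.mul_sum, ← Finset.mul_sum, mul_add]
end
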